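/- arXiv:2407.08560 — 4 statements merged into one kernel-verified Lean document; each statement's English description precedes it below -/
import Mathlib

section
/- Under the stated dynamic treatment setup with fixed nuisance estimates π̂, ρ̂, ν̂, μ̂ (π̂ ≥ 1/K, ρ̂ ≥ 1/K pointwise, and ‖ν̂‖_∞, ‖μ̂‖_∞ ≤ B), suppose also |Y| ≤ B, ‖ν⁰‖_∞ ≤ B and ‖μ⁰‖_∞ ≤ B almost surely. Then there exists a constant C depending only on (M, K, B) such that the doubly robust score ψ(Z; η) := μ(S₁) + T₁·(ν(S̄₂) − μ(S₁))/π(S₁) + T₁·T₂·(Y − ν(S̄₂))/(π(S₁)·ρ(S̄₂)) satisfies the second-moment stability bound E[(ψ(Z; η̂) − ψ(Z; η⁰))²] ≤ C·( E[T₁·T₂·(ν̂(S̄₂) − ν⁰(S̄₂))²] + E[T₁·(μ̂(S₁) − μ⁰(S₁))²] + E[(π̂(S₁) − π⁰(S₁))²] + E[T₁·(ρ̂(S̄₂) − ρ⁰(S̄₂))²] ). -/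
open MeasureTheory ProbabilityTheory

lemma dte_sum4_sq (y1 y2 y3 y4 : ℝ) : (y1+y2+y3+y4)^2 ≤ 4*(y1^2+y2^2+y3^2+y4^2) := by
  nlinarith [sq_nonneg (y1-y2), sq_nonneg (y1-y3), sq_nonneg (y1-y4), sq_nonneg (y2-y3), sq_nonneg (y2-y4), sq_nonneg (y3-y4)]

lemma dte_coeffs (B K M : ℝ) (hB : 0 < B) (hK : 0 ≤ K) (hM : 0 ≤ M) :
    2 ≤ (2*B+2)*(K+1)^2*(M+1)^2 ∧ K+1 ≤ (2*B+2)*(K+1)^2*(M+1)^2 ∧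
    K+M^2 ≤ (2*B+2)*(K+1)^2*(M+1)^2 ∧ 2*B*K*M + 2*B*K*M^2 ≤ (2*B+2)*(K+1)^2*(M+1)^2 ∧
    2*B*K^2*M ≤ (2*B+2)*(K+1)^2*(M+1)^2 := by
  have hX : (0:ℝ) ≤ (K+1)^2*(M+1)^2 := mul_nonneg (sq_nonneg _) (sq_nonneg _)
  have h1 : (1:ℝ) ≤ (K+1)^2*(M+1)^2 := by nlinarith [sq_nonneg (K+M), mul_nonneg hK hM, sq_nonneg K, sq_nonneg M, mul_nonneg (mul_nonneg hK hK) hM, mul_nonneg hK (mul_nonneg hM hM), mul_nonneg (mul_nonneg hK hK) (mul_nonneg hM hM)]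
  have hQ : (K+1)^2*(M+1)^2 ≤ (2*B+2)*(K+1)^2*(M+1)^2 := by nlinarith [mul_nonneg hB.le hX]
  have h2B : 2*B*((K+1)^2*(M+1)^2) ≤ (2*B+2)*(K+1)^2*(M+1)^2 := by nlinarith [hX]
  have hM1 : (1:ℝ) ≤ (M+1)^2 := by nlinarith
  have hK1 : (1:ℝ) ≤ (K+1)^2 := by nlinarith
  refine ⟨by nlinarith, ?_, ?_, ?_, ?_⟩
  · have : K+1 ≤ (K+1)^2*(M+1)^2 := by nlinarith [mul_nonneg (sq_nonneg (K+1)) hM, sq_nonneg (K+1), mul_nonneg hK hK]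
    linarith
  · have : K+M^2 ≤ (K+1)^2*(M+1)^2 := by
      nlinarith [mul_nonneg hK hM, mul_nonneg hK (mul_nonneg hM hM), mul_nonneg (mul_nonneg hK hK) hM, mul_nonneg (mul_nonneg hK hK) (mul_nonneg hM hM), mul_nonneg hM (mul_nonneg hK hK), sq_nonneg K, sq_nonneg M, mul_nonneg hK hK, mul_nonneg hM hM]
    linarith
  · have h : K*M*(1+M) ≤ (K+1)^2*(M+1)^2 := by
      nlinarith [mul_nonneg hK hM, mul_nonneg hK (mul_nonneg hM hM), mul_nonneg (mul_nonneg hK hK) hM, mul_nonneg (mul_nonneg hK hK) (mul_nonneg hM hM), sq_nonneg K, sq_nonneg M, mul_nonneg hK hK, mul_nonneg hM hM]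
    have := mul_le_mul_of_nonneg_left h (by linarith : (0:ℝ) ≤ 2*B)
    nlinarith
  · have h : K^2*M ≤ (K+1)^2*(M+1)^2 := by
      nlinarith [mul_nonneg (mul_nonneg hK hK) hM, mul_nonneg (mul_nonneg hK hK) (mul_nonneg hM hM), mul_nonneg hK hM, mul_nonneg hK hK, mul_nonneg hM hM, sq_nonneg K, sq_nonneg M, mul_nonneg hK (mul_nonneg hM hM)]
    have := mul_le_mul_of_nonneg_left h (by linarith : (0:ℝ) ≤ 2*B)
    nlinarith

lemma dte_ptwise (B K M : ℝ) (hB : 0 < B) (hK : 0 ≤ K) (hM : 0 ≤ M)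
    (t1 t2 y m0 mh n0 nh a b c d ep er : ℝ)
    (ht1 : t1 = 0 ∨ t1 = 1) (ht2 : t2 = 0 ∨ t2 = 1)
    (ha0 : 0 ≤ a) (haK : a ≤ K) (hb0 : 0 ≤ b) (hbM : b ≤ M)
    (hc0 : 0 ≤ c) (hcK : c ≤ K) (hd0 : 0 ≤ d) (hdM : d ≤ M)
    (hy : |y| ≤ B) (hn0 : |n0| ≤ B) (hm0 : |m0| ≤ B) (hnh : |nh| ≤ B) (hmh : |mh| ≤ B)
    (hab : |a - b| ≤ K*M*ep) (hcd : |c - d| ≤ K*M*er) (hep : 0 ≤ ep) (her : 0 ≤ er) :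
    ((mh + t1*(nh-mh)*a + t1*t2*(y-nh)*(a*c)) - (m0 + t1*(n0-m0)*b + t1*t2*(y-n0)*(b*d)))^2
      ≤ (4*((2*B+2)*(K+1)^2*(M+1)^2)^2) * (t1*(nh-n0)^2 + (mh-m0)^2 + ep^2 + t1*er^2) := by
  obtain ⟨L, hLdef⟩ : ∃ L:ℝ, L = (2*B+2)*(K+1)^2*(M+1)^2 := ⟨_, rfl⟩
  rw [show (4*((2*B+2)*(K+1)^2*(M+1)^2)^2) = 4*L^2 by rw [hLdef]]
  obtain ⟨hL0, hL1, hL2, hL3, hL4⟩ := dte_coeffs B K M hB hK hM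
  rw [← hLdef] at hL0 hL1 hL2 hL3 hL4
  clear hLdef
  have hLpos : (0:ℝ) ≤ L := by linarith
  rcases ht1 with h1 | h1
  · subst h1
    simp only [zero_mul, mul_zero]
    nlinarith [sq_nonneg (mh-m0), sq_nonneg ep, sq_nonneg (L-2),
      mul_nonneg (mul_nonneg hLpos hLpos) (sq_nonneg (mh-m0)),
      mul_nonneg (mul_nonneg hLpos hLpos) (sq_nonneg ep)]
  · subst h1
    have hx1 : (0:ℝ) ≤ |nh - n0| := abs_nonneg _
    have hx2 : (0:ℝ) ≤ |mh - m0| := abs_nonneg _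
    have e1 : |(mh-m0)*(1-a)| ≤ (K+1) * |mh - m0| := by
      rw [abs_mul, mul_comm]
      apply mul_le_mul_of_nonneg_right _ hx2
      rw [abs_le]; constructor <;> linarith
    have e2 : |(nh-n0)*a| ≤ K * |nh - n0| := by
      rw [abs_mul, mul_comm]
      exact mul_le_mul_of_nonneg_right (by rwa [abs_of_nonneg ha0]) hx1
    have e3 : |(n0-m0)*(a-b)| ≤ (2*B)*(K*M*ep) := by
      rw [abs_mul]
      apply mul_le_mul (by calc |n0-m0| ≤ |n0| + |m0| := abs_sub _ _
                            _ ≤ 2*B := by linarith) hab (abs_nonneg _) (by linarith)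
    have e4 : |(y-nh)*(a*c-b*d)| ≤ (2*B)*(K*(K*M*er) + (K*M*ep)*M) := by
      have habcd : |a*c-b*d| ≤ K*(K*M*er) + (K*M*ep)*M := by
        calc |a*c-b*d| = |a*(c-d)+(a-b)*d| := by ring_nf
          _ ≤ |a*(c-d)| + |(a-b)*d| := abs_add_le _ _
          _ = a * |c - d| + |a - b| * d := by
              rw [abs_mul, abs_mul, abs_of_nonneg ha0, abs_of_nonneg hd0]
          _ ≤ K*(K*M*er) + (K*M*ep)*M := by
              apply add_le_add
              · exact mul_le_mul haK hcd (abs_nonneg _) hK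
              · exact mul_le_mul hab hdM hd0 (by positivity)
      rw [abs_mul]
      apply mul_le_mul (by calc |y-nh| ≤ |y| + |nh| := abs_sub _ _
                            _ ≤ 2*B := by linarith) habcd (abs_nonneg _) (by linarith)
    have e5 : |(n0-nh)*(b*d)| ≤ M^2 * |nh - n0| := by
      rw [abs_mul, abs_sub_comm, mul_comm]
      apply mul_le_mul_of_nonneg_right _ hx1
      rw [abs_of_nonneg (mul_nonneg hb0 hd0)]
      calc b*d ≤ M*M := mul_le_mul hbM hdM hd0 hM
        _ = M^2 := by ring
    have key : ∀ Δ : ℝ, |Δ| ≤ L * |nh - n0| + L * |mh - m0| + L*ep + L*er →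
        Δ^2 ≤ (4*L^2) * (1*(nh-n0)^2 + (mh-m0)^2 + ep^2 + 1*er^2) := by
      intro Δ hS
      calc Δ^2 ≤ (L * |nh - n0| + L * |mh - m0| + L*ep + L*er)^2 := by
            rw [← sq_abs]; exact pow_le_pow_left₀ (abs_nonneg _) hS 2
        _ ≤ 4*((L * |nh - n0|)^2+(L * |mh - m0|)^2+(L*ep)^2+(L*er)^2) := dte_sum4_sq _ _ _ _
        _ = (4*L^2) * (|nh - n0|^2 + |mh - m0|^2 + ep^2 + er^2) := by ring
        _ = (4*L^2) * (1*(nh-n0)^2 + (mh-m0)^2 + ep^2 + 1*er^2) := by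
            rw [sq_abs, sq_abs]; ring
    rcases ht2 with h2 | h2 <;> subst h2
    · apply key
      have hdecomp : ((mh + 1*(nh-mh)*a + 1*0*(y-nh)*(a*c)) - (m0 + 1*(n0-m0)*b + 1*0*(y-n0)*(b*d)))
          = (mh-m0)*(1-a) + (nh-n0)*a + (n0-m0)*(a-b) := by ring
      rw [hdecomp]
      calc |(mh-m0)*(1-a) + (nh-n0)*a + (n0-m0)*(a-b)|
          ≤ |(mh-m0)*(1-a)| + |(nh-n0)*a| + |(n0-m0)*(a-b)| :=
            (abs_add_le _ _).trans (by gcongr; exact abs_add_le _ _)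
        _ ≤ (K+1) * |mh - m0| + K * |nh - n0| + (2*B)*(K*M*ep) := by gcongr
        _ ≤ L * |nh - n0| + L * |mh - m0| + L*ep + L*er := by
            have hb1 : (0:ℝ) ≤ 2*B*K*M^2 := by positivity
            linarith [mul_nonneg (by linarith : (0:ℝ) ≤ L - (K+1)) hx2,
              mul_nonneg (by linarith : (0:ℝ) ≤ L - K) hx1,
              mul_nonneg (by linarith : (0:ℝ) ≤ L - 2*B*K*M) hep,
              mul_nonneg hLpos her]
    · apply key
      have hdecomp : ((mh + 1*(nh-mh)*a + 1*1*(y-nh)*(a*c)) - (m0 + 1*(n0-m0)*b + 1*1*(y-n0)*(b*d)))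
          = (mh-m0)*(1-a) + (nh-n0)*a + (n0-m0)*(a-b) + (y-nh)*(a*c-b*d) + (n0-nh)*(b*d) := by ring
      rw [hdecomp]
      calc |(mh-m0)*(1-a) + (nh-n0)*a + (n0-m0)*(a-b) + (y-nh)*(a*c-b*d) + (n0-nh)*(b*d)|
          ≤ |(mh-m0)*(1-a)| + |(nh-n0)*a| + |(n0-m0)*(a-b)| + |(y-nh)*(a*c-b*d)| + |(n0-nh)*(b*d)| :=
            (abs_add_le _ _).trans (by gcongr; exact (abs_add_le _ _).trans (by gcongr; exact (abs_add_le _ _).trans (by gcongr; exact abs_add_le _ _)))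
        _ ≤ (K+1) * |mh - m0| + K * |nh - n0| + (2*B)*(K*M*ep) + (2*B)*(K*(K*M*er) + (K*M*ep)*M) + M^2 * |nh - n0| := by gcongr
        _ ≤ L * |nh - n0| + L * |mh - m0| + L*ep + L*er := by
            linarith [mul_nonneg (by linarith : (0:ℝ) ≤ L - (K+1)) hx2,
              mul_nonneg (by linarith : (0:ℝ) ≤ L - (K+M^2)) hx1,
              mul_nonneg (by linarith : (0:ℝ) ≤ L - (2*B*K*M + 2*B*K*M^2)) hep,
              mul_nonneg (by linarith : (0:ℝ) ≤ L - 2*B*K^2*M) her]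

set_option maxHeartbeats 2000000 in
/-- Second-moment stability of the dynamic doubly robust score: there is a
constant `C` depending only on `(M, K, B)` such that, for every dynamic treatment setup with
bounded nuisances and bounded nuisance estimates, the squared score difference is controlled by
the four nuisance estimation errors. -/
theorem dte_score_second_moment_stability (M K B : ℝ) (hM : 0 < M) (hK : 0 < K) (hB : 0 < B) :
    ∃ C : ℝ, 0 < C ∧
      ∀ (Ω : Type) (_ : MeasurableSpace Ω) (P : Measure Ω), IsProbabilityMeasure P →
      ∀ (d₁ d₂ : ℕ) (S1 : Ω → (Fin d₁ → ℝ)) (S2 : Ω → (Fin d₂ → ℝ)),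
        Measurable S1 → Measurable S2 →
      ∀ T1 T2 : Ω → ℝ, Measurable T1 → Measurable T2 →
        (∀ ω, T1 ω = 0 ∨ T1 ω = 1) → (∀ ω, T2 ω = 0 ∨ T2 ω = 1) →
      ∀ Y11 Y : Ω → ℝ, Measurable Y11 → Measurable Y → (∃ C', ∀ ω, |Y11 ω| ≤ C') →
        (∀ ω, T1 ω * T2 ω * Y ω = T1 ω * T2 ω * Y11 ω) →
      ∀ (π0 μ0 : (Fin d₁ → ℝ) → ℝ) (ρ0 ν0 : (Fin d₁ → ℝ) × (Fin d₂ → ℝ) → ℝ),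
        Measurable π0 → Measurable μ0 → Measurable ρ0 → Measurable ν0 →
        (∃ C', ∀ x, |π0 x| ≤ C') → (∃ C', ∀ x, |μ0 x| ≤ C') →
        (∃ C', ∀ x, |ρ0 x| ≤ C') → (∃ C', ∀ x, |ν0 x| ≤ C') →
        (∀ h : (Fin d₁ → ℝ) → ℝ, Measurable h → (∃ C', ∀ x, |h x| ≤ C') →
          ∫ ω, T1 ω * h (S1 ω) ∂P = ∫ ω, π0 (S1 ω) * h (S1 ω) ∂P) →
        (∀ h : (Fin d₁ → ℝ) × (Fin d₂ → ℝ) → ℝ, Measurable h → (∃ C', ∀ x, |h x| ≤ C') →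
          ∫ ω, T1 ω * T2 ω * h (S1 ω, S2 ω) ∂P
            = ∫ ω, T1 ω * ρ0 (S1 ω, S2 ω) * h (S1 ω, S2 ω) ∂P) →
        (∀ h : (Fin d₁ → ℝ) × (Fin d₂ → ℝ) → ℝ, Measurable h → (∃ C', ∀ x, |h x| ≤ C') →
          ∫ ω, T1 ω * T2 ω * Y11 ω * h (S1 ω, S2 ω) ∂P
            = ∫ ω, T1 ω * T2 ω * ν0 (S1 ω, S2 ω) * h (S1 ω, S2 ω) ∂P) →
        (∀ h : (Fin d₁ → ℝ) → ℝ, Measurable h → (∃ C', ∀ x, |h x| ≤ C') →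
          ∫ ω, T1 ω * Y11 ω * h (S1 ω) ∂P = ∫ ω, T1 ω * μ0 (S1 ω) * h (S1 ω) ∂P) →
        (∀ᵐ ω ∂P, 1 / M ≤ π0 (S1 ω) ∧ 1 / M ≤ ρ0 (S1 ω, S2 ω)) →
        (∀ᵐ ω ∂P, |Y ω| ≤ B ∧ |ν0 (S1 ω, S2 ω)| ≤ B ∧ |μ0 (S1 ω)| ≤ B) →
      ∀ (πh μh : (Fin d₁ → ℝ) → ℝ) (ρh νh : (Fin d₁ → ℝ) × (Fin d₂ → ℝ) → ℝ),
        Measurable πh → Measurable μh → Measurable ρh → Measurable νh →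
        (∀ x, 1 / K ≤ πh x) → (∀ x, 1 / K ≤ ρh x) →
        (∀ x, |νh x| ≤ B) → (∀ x, |μh x| ≤ B) →
        (∃ C', ∀ x, |πh x| ≤ C') → (∃ C', ∀ x, |ρh x| ≤ C') →
      (∫ ω, ((μh (S1 ω) + T1 ω * (νh (S1 ω, S2 ω) - μh (S1 ω)) / πh (S1 ω)
            + T1 ω * T2 ω * (Y ω - νh (S1 ω, S2 ω)) / (πh (S1 ω) * ρh (S1 ω, S2 ω)))
          - (μ0 (S1 ω) + T1 ω * (ν0 (S1 ω, S2 ω) - μ0 (S1 ω)) / π0 (S1 ω)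
            + T1 ω * T2 ω * (Y ω - ν0 (S1 ω, S2 ω)) / (π0 (S1 ω) * ρ0 (S1 ω, S2 ω)))) ^ 2 ∂P)
        ≤ C * ((∫ ω, T1 ω * T2 ω * (νh (S1 ω, S2 ω) - ν0 (S1 ω, S2 ω)) ^ 2 ∂P)
            + (∫ ω, T1 ω * (μh (S1 ω) - μ0 (S1 ω)) ^ 2 ∂P)
            + (∫ ω, (πh (S1 ω) - π0 (S1 ω)) ^ 2 ∂P)
            + ∫ ω, T1 ω * (ρh (S1 ω, S2 ω) - ρ0 (S1 ω, S2 ω)) ^ 2 ∂P) := by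
  refine ⟨(4*((2*B+2)*(K+1)^2*(M+1)^2)^2)*(M+1), by positivity, ?_⟩
  intro Ω mΩ P hP d₁ d₂ S1 S2 hS1 hS2 T1 T2 hT1 hT2 hT1b hT2b Y11 Y hY11 hY hY11bd hcons
    π0 μ0 ρ0 ν0 hπ0m hμ0m hρ0m hν0m hπ0b hμ0b hρ0b hν0b hmomπ hmomρ hmomν hmomμ hpos haeB
    πh μh ρh νh hπhm hμhm hρhm hνhm hπhK hρhK hνhB hμhB hπhb hρhb
  obtain ⟨C0, hC0def⟩ : ∃ c : ℝ, c = 4*((2*B+2)*(K+1)^2*(M+1)^2)^2 := ⟨_, rfl⟩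
  have hC0pos : 0 < C0 := by rw [hC0def]; positivity
  rw [show (4*((2*B+2)*(K+1)^2*(M+1)^2)^2)*(M+1) = C0*(M+1) by rw [hC0def]]
  -- measurability of composed functions
  have mS : Measurable fun ω => (S1 ω, S2 ω) := hS1.prodMk hS2
  have mμh : Measurable fun ω => μh (S1 ω) := hμhm.comp hS1
  have mμ0 : Measurable fun ω => μ0 (S1 ω) := hμ0m.comp hS1
  have mπh : Measurable fun ω => πh (S1 ω) := hπhm.comp hS1
  have mπ0 : Measurable fun ω => π0 (S1 ω) := hπ0m.comp hS1
  have mνh : Measurable fun ω => νh (S1 ω, S2 ω) := hνhm.comp mS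
  have mν0 : Measurable fun ω => ν0 (S1 ω, S2 ω) := hν0m.comp mS
  have mρh : Measurable fun ω => ρh (S1 ω, S2 ω) := hρhm.comp mS
  have mρ0 : Measurable fun ω => ρ0 (S1 ω, S2 ω) := hρ0m.comp mS
  -- indicator range facts
  have hT1r : ∀ ω, 0 ≤ T1 ω ∧ T1 ω ≤ 1 := fun ω => by rcases hT1b ω with h | h <;> simp [h]
  have hT2r : ∀ ω, 0 ≤ T2 ω ∧ T2 ω ≤ 1 := fun ω => by rcases hT2b ω with h | h <;> simp [h]
  have hT1a : ∀ ω, |T1 ω| ≤ 1 := fun ω => by rcases hT1b ω with h | h <;> simp [h]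
  have hT2a : ∀ ω, |T2 ω| ≤ 1 := fun ω => by rcases hT2b ω with h | h <;> simp [h]
  -- global bounds
  obtain ⟨Cπ0, hCπ0⟩ := hπ0b
  obtain ⟨Cρ0, hCρ0⟩ := hρ0b
  obtain ⟨Cν0, hCν0⟩ := hν0b
  obtain ⟨Cμ0, hCμ0⟩ := hμ0b
  obtain ⟨Cπh, hCπh⟩ := hπhb
  obtain ⟨Cρh, hCρh⟩ := hρhb
  -- helpers
  have habs_mul : ∀ x y A A' : ℝ, |x| ≤ A → |y| ≤ A' → |x*y| ≤ A*A' := by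
    intro x y A A' hx hy
    rw [abs_mul]
    exact mul_le_mul hx hy (abs_nonneg _) ((abs_nonneg x).trans hx)
  have habs_sq : ∀ x A : ℝ, |x| ≤ A → |x^2| ≤ A^2 := by
    intro x A h
    rw [abs_of_nonneg (sq_nonneg x), ← sq_abs]
    exact pow_le_pow_left₀ (abs_nonneg x) h 2
  have habs_sub : ∀ x y A A' : ℝ, |x| ≤ A → |y| ≤ A' → |x - y| ≤ A + A' := by
    intro x y A A' hx hy
    exact (abs_sub x y).trans (add_le_add hx hy)
  have intg : ∀ f : Ω → ℝ, Measurable f → ∀ c : ℝ, (∀ᵐ ω ∂P, |f ω| ≤ c) → Integrable f P :=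
    fun f hf c h => ⟨hf.aestronglyMeasurable, HasFiniteIntegral.of_bounded h⟩
  -- integrable pieces
  have iν : Integrable (fun ω => T1 ω * T2 ω * (νh (S1 ω, S2 ω) - ν0 (S1 ω, S2 ω)) ^ 2) P := by
    refine intg _ ((hT1.mul hT2).mul ((mνh.sub mν0).pow_const 2)) ((1*1)*(B+Cν0)^2) ?_
    filter_upwards with ω
    exact habs_mul _ _ _ _ (habs_mul _ _ _ _ (hT1a ω) (hT2a ω))
      (habs_sq _ _ (habs_sub _ _ _ _ (hνhB _) (hCν0 _)))
  have iν1 : Integrable (fun ω => T1 ω * (νh (S1 ω, S2 ω) - ν0 (S1 ω, S2 ω)) ^ 2) P := by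
    refine intg _ (hT1.mul ((mνh.sub mν0).pow_const 2)) (1*(B+Cν0)^2) ?_
    filter_upwards with ω
    exact habs_mul _ _ _ _ (hT1a ω) (habs_sq _ _ (habs_sub _ _ _ _ (hνhB _) (hCν0 _)))
  have iνρ : Integrable (fun ω => T1 ω * ρ0 (S1 ω, S2 ω) * (νh (S1 ω, S2 ω) - ν0 (S1 ω, S2 ω)) ^ 2) P := by
    refine intg _ ((hT1.mul mρ0).mul ((mνh.sub mν0).pow_const 2)) ((1*Cρ0)*(B+Cν0)^2) ?_
    filter_upwards with ω
    exact habs_mul _ _ _ _ (habs_mul _ _ _ _ (hT1a ω) (hCρ0 _))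
      (habs_sq _ _ (habs_sub _ _ _ _ (hνhB _) (hCν0 _)))
  have iμ1 : Integrable (fun ω => T1 ω * (μh (S1 ω) - μ0 (S1 ω)) ^ 2) P := by
    refine intg _ (hT1.mul ((mμh.sub mμ0).pow_const 2)) (1*(B+Cμ0)^2) ?_
    filter_upwards with ω
    exact habs_mul _ _ _ _ (hT1a ω) (habs_sq _ _ (habs_sub _ _ _ _ (hμhB _) (hCμ0 _)))
  have iμ0 : Integrable (fun ω => (μh (S1 ω) - μ0 (S1 ω)) ^ 2) P := by
    refine intg _ ((mμh.sub mμ0).pow_const 2) ((B+Cμ0)^2) ?_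
    filter_upwards with ω
    exact habs_sq _ _ (habs_sub _ _ _ _ (hμhB _) (hCμ0 _))
  have iμπ : Integrable (fun ω => π0 (S1 ω) * (μh (S1 ω) - μ0 (S1 ω)) ^ 2) P := by
    refine intg _ (mπ0.mul ((mμh.sub mμ0).pow_const 2)) (Cπ0*(B+Cμ0)^2) ?_
    filter_upwards with ω
    exact habs_mul _ _ _ _ (hCπ0 _) (habs_sq _ _ (habs_sub _ _ _ _ (hμhB _) (hCμ0 _)))
  have iπ : Integrable (fun ω => (πh (S1 ω) - π0 (S1 ω)) ^ 2) P := by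
    refine intg _ ((mπh.sub mπ0).pow_const 2) ((Cπh+Cπ0)^2) ?_
    filter_upwards with ω
    exact habs_sq _ _ (habs_sub _ _ _ _ (hCπh _) (hCπ0 _))
  have iρ1 : Integrable (fun ω => T1 ω * (ρh (S1 ω, S2 ω) - ρ0 (S1 ω, S2 ω)) ^ 2) P := by
    refine intg _ (hT1.mul ((mρh.sub mρ0).pow_const 2)) (1*(Cρh+Cρ0)^2) ?_
    filter_upwards with ω
    exact habs_mul _ _ _ _ (hT1a ω) (habs_sq _ _ (habs_sub _ _ _ _ (hCρh _) (hCρ0 _)))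
  have ig : Integrable (fun ω => C0 * (T1 ω * (νh (S1 ω, S2 ω) - ν0 (S1 ω, S2 ω)) ^ 2
      + (μh (S1 ω) - μ0 (S1 ω)) ^ 2 + (πh (S1 ω) - π0 (S1 ω)) ^ 2
      + T1 ω * (ρh (S1 ω, S2 ω) - ρ0 (S1 ω, S2 ω)) ^ 2)) P :=
    (((iν1.add iμ0).add iπ).add iρ1).const_mul C0
  -- Step A : a.e. pointwise bound
  have stepA : ∀ᵐ ω ∂P, ((μh (S1 ω) + T1 ω * (νh (S1 ω, S2 ω) - μh (S1 ω)) / πh (S1 ω)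
            + T1 ω * T2 ω * (Y ω - νh (S1 ω, S2 ω)) / (πh (S1 ω) * ρh (S1 ω, S2 ω)))
          - (μ0 (S1 ω) + T1 ω * (ν0 (S1 ω, S2 ω) - μ0 (S1 ω)) / π0 (S1 ω)
            + T1 ω * T2 ω * (Y ω - ν0 (S1 ω, S2 ω)) / (π0 (S1 ω) * ρ0 (S1 ω, S2 ω)))) ^ 2
        ≤ C0 * (T1 ω * (νh (S1 ω, S2 ω) - ν0 (S1 ω, S2 ω)) ^ 2
      + (μh (S1 ω) - μ0 (S1 ω)) ^ 2 + (πh (S1 ω) - π0 (S1 ω)) ^ 2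
      + T1 ω * (ρh (S1 ω, S2 ω) - ρ0 (S1 ω, S2 ω)) ^ 2) := by
    filter_upwards [hpos, haeB] with ω hp hb
    have hKpos : (0:ℝ) < 1/K := by positivity
    have hMpos : (0:ℝ) < 1/M := by positivity
    have hppos : 0 < πh (S1 ω) := hKpos.trans_le (hπhK _)
    have hqpos : 0 < π0 (S1 ω) := hMpos.trans_le hp.1
    have hrpos : 0 < ρh (S1 ω, S2 ω) := hKpos.trans_le (hρhK _)
    have hspos : 0 < ρ0 (S1 ω, S2 ω) := hMpos.trans_le hp.2
    have haK : (πh (S1 ω))⁻¹ ≤ K := by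
      rw [inv_eq_one_div]
      calc 1 / πh (S1 ω) ≤ 1 / (1/K) := one_div_le_one_div_of_le hKpos (hπhK _)
        _ = K := one_div_one_div K
    have hbM : (π0 (S1 ω))⁻¹ ≤ M := by
      rw [inv_eq_one_div]
      calc 1 / π0 (S1 ω) ≤ 1 / (1/M) := one_div_le_one_div_of_le hMpos hp.1
        _ = M := one_div_one_div M
    have hcK : (ρh (S1 ω, S2 ω))⁻¹ ≤ K := by
      rw [inv_eq_one_div]
      calc 1 / ρh (S1 ω, S2 ω) ≤ 1 / (1/K) := one_div_le_one_div_of_le hKpos (hρhK _)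
        _ = K := one_div_one_div K
    have hdM : (ρ0 (S1 ω, S2 ω))⁻¹ ≤ M := by
      rw [inv_eq_one_div]
      calc 1 / ρ0 (S1 ω, S2 ω) ≤ 1 / (1/M) := one_div_le_one_div_of_le hMpos hp.2
        _ = M := one_div_one_div M
    have hab : |(πh (S1 ω))⁻¹ - (π0 (S1 ω))⁻¹| ≤ K*M*|πh (S1 ω) - π0 (S1 ω)| := by
      have he : (πh (S1 ω))⁻¹ - (π0 (S1 ω))⁻¹
          = (π0 (S1 ω) - πh (S1 ω)) * ((πh (S1 ω))⁻¹ * (π0 (S1 ω))⁻¹) := by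
        field_simp
      rw [he, abs_mul, abs_sub_comm (π0 (S1 ω)),
        abs_of_nonneg (by positivity : (0:ℝ) ≤ (πh (S1 ω))⁻¹ * (π0 (S1 ω))⁻¹), mul_comm]
      exact mul_le_mul (mul_le_mul haK hbM (by positivity) ((inv_nonneg.2 hppos.le).trans haK))
        le_rfl (abs_nonneg _) (by positivity)
    have hcd : |(ρh (S1 ω, S2 ω))⁻¹ - (ρ0 (S1 ω, S2 ω))⁻¹|
        ≤ K*M*|ρh (S1 ω, S2 ω) - ρ0 (S1 ω, S2 ω)| := by
      have he : (ρh (S1 ω, S2 ω))⁻¹ - (ρ0 (S1 ω, S2 ω))⁻¹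
          = (ρ0 (S1 ω, S2 ω) - ρh (S1 ω, S2 ω)) * ((ρh (S1 ω, S2 ω))⁻¹ * (ρ0 (S1 ω, S2 ω))⁻¹) := by
        field_simp
      rw [he, abs_mul, abs_sub_comm (ρ0 (S1 ω, S2 ω)),
        abs_of_nonneg (by positivity : (0:ℝ) ≤ (ρh (S1 ω, S2 ω))⁻¹ * (ρ0 (S1 ω, S2 ω))⁻¹), mul_comm]
      exact mul_le_mul (mul_le_mul hcK hdM (by positivity) ((inv_nonneg.2 hrpos.le).trans hcK))
        le_rfl (abs_nonneg _) (by positivity)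
    have key := dte_ptwise B K M hB hK.le hM.le (T1 ω) (T2 ω) (Y ω)
      (μ0 (S1 ω)) (μh (S1 ω)) (ν0 (S1 ω, S2 ω)) (νh (S1 ω, S2 ω))
      (πh (S1 ω))⁻¹ (π0 (S1 ω))⁻¹ (ρh (S1 ω, S2 ω))⁻¹ (ρ0 (S1 ω, S2 ω))⁻¹
      |πh (S1 ω) - π0 (S1 ω)| |ρh (S1 ω, S2 ω) - ρ0 (S1 ω, S2 ω)|
      (hT1b ω) (hT2b ω) (by positivity) haK (by positivity) hbM (by positivity) hcK
      (by positivity) hdM hb.1 hb.2.1 hb.2.2 (hνhB _) (hμhB _) hab hcd (abs_nonneg _) (abs_nonneg _)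
    rw [← hC0def, sq_abs, sq_abs] at key
    simp only [div_eq_mul_inv, mul_inv]
    exact key
  -- integrability of the squared score difference
  have mbase : Measurable (fun ω => (μh (S1 ω) + T1 ω * (νh (S1 ω, S2 ω) - μh (S1 ω)) / πh (S1 ω)
            + T1 ω * T2 ω * (Y ω - νh (S1 ω, S2 ω)) / (πh (S1 ω) * ρh (S1 ω, S2 ω)))
          - (μ0 (S1 ω) + T1 ω * (ν0 (S1 ω, S2 ω) - μ0 (S1 ω)) / π0 (S1 ω)
            + T1 ω * T2 ω * (Y ω - ν0 (S1 ω, S2 ω)) / (π0 (S1 ω) * ρ0 (S1 ω, S2 ω)))) :=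
    ((mμh.add ((hT1.mul (mνh.sub mμh)).div mπh)).add
      (((hT1.mul hT2).mul (hY.sub mνh)).div (mπh.mul mρh))).sub
    ((mμ0.add ((hT1.mul (mν0.sub mμ0)).div mπ0)).add
      (((hT1.mul hT2).mul (hY.sub mν0)).div (mπ0.mul mρ0)))
  have if2 : Integrable (fun ω => ((μh (S1 ω) + T1 ω * (νh (S1 ω, S2 ω) - μh (S1 ω)) / πh (S1 ω)
            + T1 ω * T2 ω * (Y ω - νh (S1 ω, S2 ω)) / (πh (S1 ω) * ρh (S1 ω, S2 ω)))
          - (μ0 (S1 ω) + T1 ω * (ν0 (S1 ω, S2 ω) - μ0 (S1 ω)) / π0 (S1 ω)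
            + T1 ω * T2 ω * (Y ω - ν0 (S1 ω, S2 ω)) / (π0 (S1 ω) * ρ0 (S1 ω, S2 ω)))) ^ 2) P := by
    refine intg _ (mbase.pow_const 2)
      (C0 * (1*(B+Cν0)^2 + (B+Cμ0)^2 + (Cπh+Cπ0)^2 + 1*(Cρh+Cρ0)^2)) ?_
    filter_upwards [stepA] with ω h1
    rw [abs_of_nonneg (sq_nonneg _)]
    refine h1.trans ?_
    have e1 : T1 ω * (νh (S1 ω, S2 ω) - ν0 (S1 ω, S2 ω)) ^ 2 ≤ 1*(B+Cν0)^2 :=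
      (le_abs_self _).trans (habs_mul _ _ _ _ (hT1a ω)
        (habs_sq _ _ (habs_sub _ _ _ _ (hνhB _) (hCν0 _))))
    have e2 : (μh (S1 ω) - μ0 (S1 ω)) ^ 2 ≤ (B+Cμ0)^2 :=
      (le_abs_self _).trans (habs_sq _ _ (habs_sub _ _ _ _ (hμhB _) (hCμ0 _)))
    have e3 : (πh (S1 ω) - π0 (S1 ω)) ^ 2 ≤ (Cπh+Cπ0)^2 :=
      (le_abs_self _).trans (habs_sq _ _ (habs_sub _ _ _ _ (hCπh _) (hCπ0 _)))
    have e4 : T1 ω * (ρh (S1 ω, S2 ω) - ρ0 (S1 ω, S2 ω)) ^ 2 ≤ 1*(Cρh+Cρ0)^2 :=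
      (le_abs_self _).trans (habs_mul _ _ _ _ (hT1a ω)
        (habs_sq _ _ (habs_sub _ _ _ _ (hCρh _) (hCρ0 _))))
    exact mul_le_mul_of_nonneg_left (add_le_add (add_le_add (add_le_add e1 e2) e3) e4) hC0pos.le
  -- Step C : integrate
  have stepC := integral_mono_ae if2 ig stepA
  -- Step E : ∫ T1·Dν² ≤ M·∫ T1·T2·Dν²
  have hmomρ' : (∫ ω, T1 ω * T2 ω * (νh (S1 ω, S2 ω) - ν0 (S1 ω, S2 ω)) ^ 2 ∂P)
      = ∫ ω, T1 ω * ρ0 (S1 ω, S2 ω) * (νh (S1 ω, S2 ω) - ν0 (S1 ω, S2 ω)) ^ 2 ∂P :=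
    hmomρ (fun x => (νh x - ν0 x)^2) ((hνhm.sub hν0m).pow_const 2)
      ⟨(B+Cν0)^2, fun x => habs_sq _ _ (habs_sub _ _ _ _ (hνhB _) (hCν0 _))⟩
  have stepE : (∫ ω, T1 ω * (νh (S1 ω, S2 ω) - ν0 (S1 ω, S2 ω)) ^ 2 ∂P)
      ≤ M * ∫ ω, T1 ω * T2 ω * (νh (S1 ω, S2 ω) - ν0 (S1 ω, S2 ω)) ^ 2 ∂P := by
    have hae : ∀ᵐ ω ∂P, (1/M) * (T1 ω * (νh (S1 ω, S2 ω) - ν0 (S1 ω, S2 ω)) ^ 2)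
        ≤ T1 ω * ρ0 (S1 ω, S2 ω) * (νh (S1 ω, S2 ω) - ν0 (S1 ω, S2 ω)) ^ 2 := by
      filter_upwards [hpos] with ω hp
      nlinarith [mul_nonneg (hT1r ω).1 (sq_nonneg (νh (S1 ω, S2 ω) - ν0 (S1 ω, S2 ω))), hp.2]
    have h1 : (1/M) * (∫ ω, T1 ω * (νh (S1 ω, S2 ω) - ν0 (S1 ω, S2 ω)) ^ 2 ∂P)
        ≤ ∫ ω, T1 ω * T2 ω * (νh (S1 ω, S2 ω) - ν0 (S1 ω, S2 ω)) ^ 2 ∂P := by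
      rw [← integral_const_mul, hmomρ']
      exact integral_mono_ae (iν1.const_mul _) iνρ hae
    have h2 := mul_le_mul_of_nonneg_left h1 hM.le
    rwa [← mul_assoc, mul_one_div_cancel hM.ne', one_mul] at h2
  -- Step F : ∫ Dμ² ≤ M·∫ T1·Dμ²
  have hmomπ' : (∫ ω, T1 ω * (μh (S1 ω) - μ0 (S1 ω)) ^ 2 ∂P)
      = ∫ ω, π0 (S1 ω) * (μh (S1 ω) - μ0 (S1 ω)) ^ 2 ∂P :=
    hmomπ (fun x => (μh x - μ0 x)^2) ((hμhm.sub hμ0m).pow_const 2)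
      ⟨(B+Cμ0)^2, fun x => habs_sq _ _ (habs_sub _ _ _ _ (hμhB _) (hCμ0 _))⟩
  have stepF : (∫ ω, (μh (S1 ω) - μ0 (S1 ω)) ^ 2 ∂P)
      ≤ M * ∫ ω, T1 ω * (μh (S1 ω) - μ0 (S1 ω)) ^ 2 ∂P := by
    have hae : ∀ᵐ ω ∂P, (1/M) * ((μh (S1 ω) - μ0 (S1 ω)) ^ 2)
        ≤ π0 (S1 ω) * (μh (S1 ω) - μ0 (S1 ω)) ^ 2 := by
      filter_upwards [hpos] with ω hp
      nlinarith [sq_nonneg (μh (S1 ω) - μ0 (S1 ω)), hp.1]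
    have h1 : (1/M) * (∫ ω, (μh (S1 ω) - μ0 (S1 ω)) ^ 2 ∂P)
        ≤ ∫ ω, T1 ω * (μh (S1 ω) - μ0 (S1 ω)) ^ 2 ∂P := by
      rw [← integral_const_mul, hmomπ']
      exact integral_mono_ae (iμ0.const_mul _) iμπ hae
    have h2 := mul_le_mul_of_nonneg_left h1 hM.le
    rwa [← mul_assoc, mul_one_div_cancel hM.ne', one_mul] at h2
  -- nonnegativity of the four error integrals
  have hIν : 0 ≤ ∫ ω, T1 ω * T2 ω * (νh (S1 ω, S2 ω) - ν0 (S1 ω, S2 ω)) ^ 2 ∂P :=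
    integral_nonneg fun ω => mul_nonneg (mul_nonneg (hT1r ω).1 (hT2r ω).1) (sq_nonneg _)
  have hIμ1 : 0 ≤ ∫ ω, T1 ω * (μh (S1 ω) - μ0 (S1 ω)) ^ 2 ∂P :=
    integral_nonneg fun ω => mul_nonneg (hT1r ω).1 (sq_nonneg _)
  have hIπ : 0 ≤ ∫ ω, (πh (S1 ω) - π0 (S1 ω)) ^ 2 ∂P :=
    integral_nonneg fun ω => sq_nonneg _
  have hIρ1 : 0 ≤ ∫ ω, T1 ω * (ρh (S1 ω, S2 ω) - ρ0 (S1 ω, S2 ω)) ^ 2 ∂P :=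
    integral_nonneg fun ω => mul_nonneg (hT1r ω).1 (sq_nonneg _)
  refine stepC.trans ?_
  have iB : Integrable (fun ω => T1 ω * (νh (S1 ω, S2 ω) - ν0 (S1 ω, S2 ω)) ^ 2
      + (μh (S1 ω) - μ0 (S1 ω)) ^ 2) P := iν1.add iμ0
  have iA : Integrable (fun ω => T1 ω * (νh (S1 ω, S2 ω) - ν0 (S1 ω, S2 ω)) ^ 2
      + (μh (S1 ω) - μ0 (S1 ω)) ^ 2 + (πh (S1 ω) - π0 (S1 ω)) ^ 2) P := iB.add iπ
  rw [integral_const_mul, integral_add iA iρ1, integral_add iB iπ, integral_add iν1 iμ0]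
  have ha := mul_le_mul_of_nonneg_left stepE hC0pos.le
  have hb' := mul_le_mul_of_nonneg_left stepF hC0pos.le
  nlinarith [ha, hb', mul_nonneg hC0pos.le hIν, mul_nonneg hC0pos.le hIμ1,
    mul_nonneg (mul_nonneg hC0pos.le hM.le) hIπ, mul_nonneg (mul_nonneg hC0pos.le hM.le) hIρ1,
    mul_nonneg (mul_nonneg hC0pos.le hM.le) hIν, mul_nonneg (mul_nonneg hC0pos.le hM.le) hIμ1]
end

section
/- Under the stated causal mediation setup, the counterfactual mean at treatment level t and mediator level m admits the doubly robust representation E[Y(t,m)] = E[ μ_{t,m}⁰(S₁) + 1{T=t}·(ν_{t,m}⁰(S̄₂) − μ_{t,m}⁰(S₁))/π_t⁰(S₁) + 1{T=t}·1{M=m}·(Y − ν_{t,m}⁰(S̄₂))/(π_t⁰(S₁)·ρ_{t,m}⁰(S̄₂)) ]. -/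
open MeasureTheory ProbabilityTheory Filter Set Topology

lemma intbdd {Ω : Type*} [MeasurableSpace Ω] {μ : Measure Ω} [IsFiniteMeasure μ]
    {f : Ω → ℝ} (hf : AEStronglyMeasurable f μ) (C : ℝ) (h : ∀ᵐ ω ∂μ, |f ω| ≤ C) :
    Integrable f μ :=
  (integrable_const C).mono' hf (h.mono fun ω hω => by simpa [Real.norm_eq_abs] using hω)

lemma condexp_indicator_mul_condIndep
    {Ω : Type*} {m' : MeasurableSpace Ω} [mΩ : MeasurableSpace Ω] [StandardBorelSpace Ω]
    {μ : Measure Ω} [IsProbabilityMeasure μ]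
    (hm' : m' ≤ mΩ) {f W : Ω → ℝ}
    (hf : Measurable f) (hW : Measurable W)
    (hind : CondIndepFun m' hm' f W μ) (C : ℝ) (hfb : ∀ ω, |f ω| ≤ C)
    {s : Set ℝ} (hs : MeasurableSet s) :
    μ[fun ω => (W ⁻¹' s).indicator (fun _ => (1:ℝ)) ω * f ω | m'] =ᵐ[μ]
      fun ω => (μ[(W ⁻¹' s).indicator (fun _ => (1:ℝ)) | m']) ω * (μ[f | m']) ω := by
  set IA : Ω → ℝ := (W ⁻¹' s).indicator (fun _ => (1:ℝ)) with hIA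
  have hAmeas : MeasurableSet (W ⁻¹' s) := hW hs
  have hIAm : Measurable IA := measurable_const.indicator hAmeas
  have hIAb : ∀ ω, |IA ω| ≤ 1 := by
    intro ω; by_cases h : ω ∈ W ⁻¹' s <;> simp [hIA, Set.indicator_apply, h]
  have hIAce_b : ∀ᵐ ω ∂μ, |(μ[IA|m']) ω| ≤ 1 := by
    have := ae_bdd_condExp_of_ae_bdd (m := m') (μ := μ) (R := 1)
      (ae_of_all _ fun ω => by simpa using hIAb ω)
    simpa using this
  have hkey : ∀ u : Set ℝ, MeasurableSet u →
      (μ[(f ⁻¹' u ∩ W ⁻¹' s).indicator (fun _ => (1:ℝ))|m'] =ᵐ[μ]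
        fun ω => (μ[(f ⁻¹' u).indicator (fun _ => (1:ℝ))|m']) ω * (μ[IA|m']) ω) :=
    fun u hu => ((condIndepFun_iff_condExp_inter_preimage_eq_mul hf hW).mp hind) u s hu hs
  -- step 1: simple functions
  have hsimple : ∀ g : SimpleFunc ℝ ℝ,
      μ[fun ω => IA ω * g (f ω)|m'] =ᵐ[μ]
        fun ω => (μ[IA|m']) ω * (μ[fun ω => g (f ω)|m']) ω := by
    intro g
    induction g using SimpleFunc.induction with
    | @const c u hu =>
      have e1 : (fun ω => IA ω * (SimpleFunc.piecewise u hu (SimpleFunc.const ℝ c)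
          (SimpleFunc.const ℝ 0)) (f ω)) =
          c • (f ⁻¹' u ∩ W ⁻¹' s).indicator (fun _ => (1:ℝ)) := by
        funext ω
        by_cases h1 : f ω ∈ u <;> by_cases h2 : ω ∈ W ⁻¹' s <;>
          simp [hIA, Set.indicator_apply, h1, h2, SimpleFunc.piecewise_apply]
      have e2 : (fun ω => (SimpleFunc.piecewise u hu (SimpleFunc.const ℝ c)
          (SimpleFunc.const ℝ 0)) (f ω)) = c • (f ⁻¹' u).indicator (fun _ => (1:ℝ)) := by
        funext ω
        by_cases h1 : f ω ∈ u <;>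
          simp [Set.indicator_apply, h1, SimpleFunc.piecewise_apply]
      rw [e1, e2]
      have h3 := condExp_smul (m := m') (μ := μ) c ((f ⁻¹' u ∩ W ⁻¹' s).indicator (fun _ => (1:ℝ)))
      have h4 := condExp_smul (m := m') (μ := μ) c ((f ⁻¹' u).indicator (fun _ => (1:ℝ)))
      refine h3.trans ?_
      have h5 := hkey u hu
      filter_upwards [h5, h4] with ω h5ω h4ω
      simp only [Pi.smul_apply, smul_eq_mul] at *
      rw [h5ω, h4ω]
      ring
    | @add g₁ g₂ hdisj ih1 ih2 =>
      have hint1 : Integrable (fun ω => IA ω * g₁ (f ω)) μ := by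
        obtain ⟨D, hD⟩ := g₁.exists_forall_norm_le
        refine intbdd ((hIAm.mul (g₁.measurable.comp hf)).aestronglyMeasurable) D
          (ae_of_all _ fun ω => ?_)
        calc |IA ω * g₁ (f ω)| = |IA ω| * |g₁ (f ω)| := abs_mul _ _
          _ ≤ 1 * D := by
              have := hD (f ω); rw [Real.norm_eq_abs] at this
              exact mul_le_mul (hIAb ω) this (abs_nonneg _) zero_le_one
          _ = D := one_mul D
      have hint2 : Integrable (fun ω => IA ω * g₂ (f ω)) μ := by
        obtain ⟨D, hD⟩ := g₂.exists_forall_norm_le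
        refine intbdd ((hIAm.mul (g₂.measurable.comp hf)).aestronglyMeasurable) D
          (ae_of_all _ fun ω => ?_)
        calc |IA ω * g₂ (f ω)| = |IA ω| * |g₂ (f ω)| := abs_mul _ _
          _ ≤ 1 * D := by
              have := hD (f ω); rw [Real.norm_eq_abs] at this
              exact mul_le_mul (hIAb ω) this (abs_nonneg _) zero_le_one
          _ = D := one_mul D
      have hint1' : Integrable (fun ω => g₁ (f ω)) μ := by
        obtain ⟨D, hD⟩ := g₁.exists_forall_norm_le
        exact intbdd ((g₁.measurable.comp hf).aestronglyMeasurable) D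
          (ae_of_all _ fun ω => by simpa [Real.norm_eq_abs] using hD (f ω))
      have hint2' : Integrable (fun ω => g₂ (f ω)) μ := by
        obtain ⟨D, hD⟩ := g₂.exists_forall_norm_le
        exact intbdd ((g₂.measurable.comp hf).aestronglyMeasurable) D
          (ae_of_all _ fun ω => by simpa [Real.norm_eq_abs] using hD (f ω))
      have e1 : (fun ω => IA ω * (g₁ + g₂) (f ω)) =
          (fun ω => IA ω * g₁ (f ω)) + (fun ω => IA ω * g₂ (f ω)) := by
        funext ω; simp [mul_add]
      have e2 : (fun ω => (g₁ + g₂) (f ω)) =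
          (fun ω => g₁ (f ω)) + (fun ω => g₂ (f ω)) := by
        funext ω; simp
      rw [e1, e2]
      have h3 := condExp_add (μ := μ) (m := m') hint1 hint2
      have h4 := condExp_add (μ := μ) (m := m') hint1' hint2'
      refine h3.trans ?_
      filter_upwards [ih1, ih2, h4] with ω h1ω h2ω h4ω
      simp only [Pi.add_apply] at *
      rw [h1ω, h2ω, h4ω]
      ring
  -- step 2: approximation
  have hfint : Integrable f μ := intbdd hf.aestronglyMeasurable C (ae_of_all _ hfb)
  let gs : ℕ → SimpleFunc ℝ ℝ := fun n =>
    SimpleFunc.approxOn (id : ℝ → ℝ) measurable_id univ 0 (mem_univ 0) n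
  have hgs_tendsto : ∀ x : ℝ, Tendsto (fun n => gs n x) atTop (𝓝 x) := by
    intro x
    simpa using SimpleFunc.tendsto_approxOn (f := (id : ℝ → ℝ)) measurable_id
      (mem_univ (0:ℝ)) (x := x) (by simp)
  have hgs_bound : ∀ n x, |gs n x| ≤ |x| + |x| := by
    intro n x
    simpa [Real.norm_eq_abs] using
      SimpleFunc.norm_approxOn_zero_le (f := (id : ℝ → ℝ)) measurable_id (mem_univ (0:ℝ)) x n
  have key : μ[fun ω => IA ω * f ω|m'] =ᵐ[μ] μ[fun ω => (μ[IA|m']) ω * f ω|m'] := by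
    refine tendsto_condExp_unique (fun n ω => IA ω * gs n (f ω))
      (fun n ω => (μ[IA|m']) ω * gs n (f ω))
      (fun ω => IA ω * f ω) (fun ω => (μ[IA|m']) ω * f ω)
      ?_ ?_ ?_ ?_ (fun ω => 2 * C) ?_ (fun ω => 2 * C) ?_ ?_ ?_ ?_
    · intro n
      obtain ⟨D, hD⟩ := (gs n).exists_forall_norm_le
      refine intbdd ((hIAm.mul ((gs n).measurable.comp hf)).aestronglyMeasurable) D
        (ae_of_all _ fun ω => ?_)
      calc |IA ω * gs n (f ω)| = |IA ω| * |gs n (f ω)| := abs_mul _ _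
        _ ≤ 1 * D := mul_le_mul (hIAb ω)
            (by simpa [Real.norm_eq_abs] using hD (f ω)) (abs_nonneg _) zero_le_one
        _ = D := one_mul D
    · intro n
      obtain ⟨D, hD⟩ := (gs n).exists_forall_norm_le
      refine intbdd ((stronglyMeasurable_condExp.mono hm').aestronglyMeasurable.mul
        ((gs n).measurable.comp hf).aestronglyMeasurable) D ?_
      filter_upwards [hIAce_b] with ω hω
      calc |(μ[IA|m']) ω * gs n (f ω)| = |(μ[IA|m']) ω| * |gs n (f ω)| := abs_mul _ _
        _ ≤ 1 * D := mul_le_mul hω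
            (by simpa [Real.norm_eq_abs] using hD (f ω)) (abs_nonneg _) zero_le_one
        _ = D := one_mul D
    · exact ae_of_all _ fun ω => (hgs_tendsto (f ω)).const_mul _
    · exact ae_of_all _ fun ω => (hgs_tendsto (f ω)).const_mul _
    · exact integrable_const _
    · exact integrable_const _
    · intro n
      refine ae_of_all _ fun ω => ?_
      rw [Real.norm_eq_abs, abs_mul]
      calc |IA ω| * |gs n (f ω)| ≤ 1 * (|f ω| + |f ω|) :=
            mul_le_mul (hIAb ω) (hgs_bound n (f ω)) (abs_nonneg _) zero_le_one
        _ = |f ω| + |f ω| := one_mul _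
        _ ≤ C + C := add_le_add (hfb ω) (hfb ω)
        _ = 2 * C := by ring
    · intro n
      filter_upwards [hIAce_b] with ω hω
      rw [Real.norm_eq_abs, abs_mul]
      calc |(μ[IA|m']) ω| * |gs n (f ω)| ≤ 1 * (|f ω| + |f ω|) :=
            mul_le_mul hω (hgs_bound n (f ω)) (abs_nonneg _) zero_le_one
        _ = |f ω| + |f ω| := one_mul _
        _ ≤ C + C := add_le_add (hfb ω) (hfb ω)
        _ = 2 * C := by ring
    · intro n
      refine (hsimple (gs n)).trans ?_
      have := condExp_stronglyMeasurable_mul_of_bound (μ := μ) hm' stronglyMeasurable_condExp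
        (f := μ[IA|m']) (g := fun ω => gs n (f ω))
        (by
          obtain ⟨D, hD⟩ := (gs n).exists_forall_norm_le
          exact intbdd ((gs n).measurable.comp hf).aestronglyMeasurable D
            (ae_of_all _ fun ω => by simpa [Real.norm_eq_abs] using hD (f ω)))
        1 (by filter_upwards [hIAce_b] with ω hω; simpa [Real.norm_eq_abs] using hω)
      exact this.symm
  refine key.trans ?_
  have := condExp_stronglyMeasurable_mul_of_bound (μ := μ) hm' stronglyMeasurable_condExp
    (f := μ[IA|m']) (g := f) hfint 1
    (by filter_upwards [hIAce_b] with ω hω; simpa [Real.norm_eq_abs] using hω)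
  exact this

lemma integral_mul_condexp0 {Ω : Type*} {m' : MeasurableSpace Ω} [mΩ : MeasurableSpace Ω]
    {μ : Measure Ω} [IsFiniteMeasure μ] (hm' : m' ≤ mΩ) {Z f : Ω → ℝ}
    (hZ : StronglyMeasurable[m'] Z) (D : ℝ) (hZb : ∀ᵐ ω ∂μ, ‖Z ω‖ ≤ D)
    (hfi : Integrable f μ) :
    ∫ ω, Z ω * (μ[f|m']) ω ∂μ = ∫ ω, Z ω * f ω ∂μ := by
  have h1 := condExp_stronglyMeasurable_mul_of_bound hm' hZ hfi D hZb
  calc ∫ ω, Z ω * (μ[f|m']) ω ∂μ = ∫ ω, (μ[Z * f|m']) ω ∂μ := (integral_congr_ae h1).symm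
    _ = ∫ ω, (Z * f) ω ∂μ := integral_condExp hm'
    _ = ∫ ω, Z ω * f ω ∂μ := rfl
/-- Doubly robust representation of the counterfactual mean `E[Y(t,m)]` at
treatment level `t` and mediator level `m` in the causal mediation setup. -/
theorem mediation_doubly_robust_representation
    {Ω : Type*} [MeasurableSpace Ω] [StandardBorelSpace Ω] [Nonempty Ω]
    (P : Measure Ω) [IsProbabilityMeasure P]
    (d₁ d₂ : ℕ)
    (S1 : Ω → (Fin d₁ → ℝ)) (hS1 : Measurable S1)
    (S2 : Ω → (Fin d₂ → ℝ)) (hS2 : Measurable S2)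
    (T : Ω → ℝ) (hT : Measurable T) (hT01 : ∀ ω, T ω = 0 ∨ T ω = 1)
    (Med : Ω → ℝ) (hMed : Measurable Med)
    (Mset : Set ℝ) (hMsetc : Mset.Countable) (hMedmem : ∀ ω, Med ω ∈ Mset)
    (t : ℝ) (ht : t = 0 ∨ t = 1) (m : ℝ) (hm : m ∈ Mset)
    (Ytm : Ω → ℝ) (hYtmm : Measurable Ytm) (hYtmb : ∃ C, ∀ ω, |Ytm ω| ≤ C)
    (Y : Ω → ℝ) (hYm : Measurable Y)
    (hcons : ∀ ω, (if T ω = t then (1 : ℝ) else 0) * (if Med ω = m then (1 : ℝ) else 0) * Y ω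
      = (if T ω = t then (1 : ℝ) else 0) * (if Med ω = m then (1 : ℝ) else 0) * Ytm ω)
    (κ : ℝ) (hκ : 0 < κ)
    (π0 : (Fin d₁ → ℝ) → ℝ) (ρ0 ν0 : (Fin d₁ → ℝ) × (Fin d₂ → ℝ) → ℝ)
    (μ0 : (Fin d₁ → ℝ) → ℝ)
    (hπ0m : Measurable π0) (hρ0m : Measurable ρ0) (hν0m : Measurable ν0) (hμ0m : Measurable μ0)
    (hπ0b : ∃ C, ∀ x, |π0 x| ≤ C) (hρ0b : ∃ C, ∀ x, |ρ0 x| ≤ C)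
    (hν0b : ∃ C, ∀ x, |ν0 x| ≤ C) (hμ0b : ∃ C, ∀ x, |μ0 x| ≤ C)
    (hπ0mom : ∀ h : (Fin d₁ → ℝ) → ℝ, Measurable h → (∃ C, ∀ x, |h x| ≤ C) →
      ∫ ω, (if T ω = t then (1 : ℝ) else 0) * h (S1 ω) ∂P
        = ∫ ω, π0 (S1 ω) * h (S1 ω) ∂P)
    (hρ0mom : ∀ h : (Fin d₁ → ℝ) × (Fin d₂ → ℝ) → ℝ, Measurable h → (∃ C, ∀ x, |h x| ≤ C) →
      ∫ ω, (if T ω = t then (1 : ℝ) else 0) * (if Med ω = m then (1 : ℝ) else 0)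
          * h (S1 ω, S2 ω) ∂P
        = ∫ ω, (if T ω = t then (1 : ℝ) else 0) * ρ0 (S1 ω, S2 ω) * h (S1 ω, S2 ω) ∂P)
    (hν0mom : ∀ h : (Fin d₁ → ℝ) × (Fin d₂ → ℝ) → ℝ, Measurable h → (∃ C, ∀ x, |h x| ≤ C) →
      ∫ ω, (if T ω = t then (1 : ℝ) else 0) * (if Med ω = m then (1 : ℝ) else 0) * Ytm ω
          * h (S1 ω, S2 ω) ∂P
        = ∫ ω, (if T ω = t then (1 : ℝ) else 0) * (if Med ω = m then (1 : ℝ) else 0)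
            * ν0 (S1 ω, S2 ω) * h (S1 ω, S2 ω) ∂P)
    (hμ0mom : ∀ h : (Fin d₁ → ℝ) → ℝ, Measurable h → (∃ C, ∀ x, |h x| ≤ C) →
      ∫ ω, (if T ω = t then (1 : ℝ) else 0) * Ytm ω * h (S1 ω) ∂P
        = ∫ ω, (if T ω = t then (1 : ℝ) else 0) * μ0 (S1 ω) * h (S1 ω) ∂P)
    (hpos : ∀ᵐ ω ∂P, 1 / κ ≤ π0 (S1 ω) ∧ 1 / κ ≤ ρ0 (S1 ω, S2 ω))
    (hign1 : CondIndepFun (MeasurableSpace.comap S1 inferInstance) hS1.comap_le Ytm T P)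
    (hign2 : CondIndepFun
      (MeasurableSpace.comap (fun ω => (S1 ω, S2 ω)) inferInstance)
      (Measurable.comap_le (hS1.prodMk hS2))
      Ytm Med (P[|{ω | T ω = t}])) :
    ∫ ω, Ytm ω ∂P
      = ∫ ω, (μ0 (S1 ω)
          + (if T ω = t then (1 : ℝ) else 0) * (ν0 (S1 ω, S2 ω) - μ0 (S1 ω)) / π0 (S1 ω)
          + (if T ω = t then (1 : ℝ) else 0) * (if Med ω = m then (1 : ℝ) else 0)
            * (Y ω - ν0 (S1 ω, S2 ω)) / (π0 (S1 ω) * ρ0 (S1 ω, S2 ω))) ∂P := by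
  classical
  obtain ⟨CY, hCY⟩ := hYtmb
  obtain ⟨Cν, hCν⟩ := hν0b
  obtain ⟨Cμ, hCμ⟩ := hμ0b
  obtain ⟨Cπ, hCπ⟩ := hπ0b
  obtain ⟨Cρ, hCρ⟩ := hρ0b
  have hκinv : (0:ℝ) < κ⁻¹ := inv_pos.mpr hκ
  set g1 : (Fin d₁ → ℝ) → ℝ := fun x => (max (π0 x) κ⁻¹)⁻¹ with hg1def
  set g2 : (Fin d₁ → ℝ) × (Fin d₂ → ℝ) → ℝ := fun x => (max (ρ0 x) κ⁻¹)⁻¹ with hg2def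
  have hg1m : Measurable g1 := (hπ0m.max measurable_const).inv
  have hg2m : Measurable g2 := (hρ0m.max measurable_const).inv
  have hg1b : ∀ x, |g1 x| ≤ κ := by
    intro x
    have hpos' : (0:ℝ) < max (π0 x) κ⁻¹ := lt_of_lt_of_le hκinv (le_max_right _ _)
    rw [hg1def, abs_of_pos (inv_pos.mpr hpos')]
    have := inv_anti₀ hκinv (le_max_right (π0 x) κ⁻¹)
    simpa using this
  have hg2b : ∀ x, |g2 x| ≤ κ := by
    intro x
    have hpos' : (0:ℝ) < max (ρ0 x) κ⁻¹ := lt_of_lt_of_le hκinv (le_max_right _ _)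
    rw [hg2def, abs_of_pos (inv_pos.mpr hpos')]
    have := inv_anti₀ hκinv (le_max_right (ρ0 x) κ⁻¹)
    simpa using this
  have habs : ∀ (a b A B : ℝ), |a| ≤ A → |b| ≤ B → |a * b| ≤ A * B := by
    intro a b A B h1 h2
    rw [abs_mul]
    exact mul_le_mul h1 h2 (abs_nonneg _) (le_trans (abs_nonneg _) h1)
  have hIT1 : ∀ ω, |if T ω = t then (1:ℝ) else 0| ≤ 1 := by
    intro ω; by_cases h : T ω = t <;> simp [h]
  have hIM1 : ∀ ω, |if Med ω = m then (1:ℝ) else 0| ≤ 1 := by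
    intro ω; by_cases h : Med ω = m <;> simp [h]
  have hAmeas : MeasurableSet {ω | T ω = t} := hT (measurableSet_singleton t)
  have hBmeas : MeasurableSet (Med ⁻¹' {m}) := hMed (measurableSet_singleton m)
  have hITm : Measurable (fun ω => if T ω = t then (1:ℝ) else 0) :=
    Measurable.ite hAmeas measurable_const measurable_const
  have hIMm : Measurable (fun ω => if Med ω = m then (1:ℝ) else 0) :=
    Measurable.ite (hMed (measurableSet_singleton m)) measurable_const measurable_const
  have hS2b : Measurable (fun ω => (S1 ω, S2 ω)) := hS1.prodMk hS2
  -- a.e. facts about truncated inverses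
  have hae1 : ∀ᵐ ω ∂P, g1 (S1 ω) * π0 (S1 ω) = 1 ∧ g1 (S1 ω) = (π0 (S1 ω))⁻¹ := by
    filter_upwards [hpos] with ω hω
    have h1 : κ⁻¹ ≤ π0 (S1 ω) := by rw [inv_eq_one_div]; exact hω.1
    have h2 : max (π0 (S1 ω)) κ⁻¹ = π0 (S1 ω) := max_eq_left h1
    have h3 : (0:ℝ) < π0 (S1 ω) := lt_of_lt_of_le hκinv h1
    constructor
    · show (max (π0 (S1 ω)) κ⁻¹)⁻¹ * π0 (S1 ω) = 1
      rw [h2]; exact inv_mul_cancel₀ (ne_of_gt h3)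
    · show (max (π0 (S1 ω)) κ⁻¹)⁻¹ = (π0 (S1 ω))⁻¹
      rw [h2]
  have hae2 : ∀ᵐ ω ∂P, g2 (S1 ω, S2 ω) * ρ0 (S1 ω, S2 ω) = 1
      ∧ g2 (S1 ω, S2 ω) = (ρ0 (S1 ω, S2 ω))⁻¹ := by
    filter_upwards [hpos] with ω hω
    have h1 : κ⁻¹ ≤ ρ0 (S1 ω, S2 ω) := by rw [inv_eq_one_div]; exact hω.2
    have h2 : max (ρ0 (S1 ω, S2 ω)) κ⁻¹ = ρ0 (S1 ω, S2 ω) := max_eq_left h1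
    have h3 : (0:ℝ) < ρ0 (S1 ω, S2 ω) := lt_of_lt_of_le hκinv h1
    constructor
    · show (max (ρ0 (S1 ω, S2 ω)) κ⁻¹)⁻¹ * ρ0 (S1 ω, S2 ω) = 1
      rw [h2]; exact inv_mul_cancel₀ (ne_of_gt h3)
    · show (max (ρ0 (S1 ω, S2 ω)) κ⁻¹)⁻¹ = (ρ0 (S1 ω, S2 ω))⁻¹
      rw [h2]
  -- integrability of the five pieces
  have hF1i : Integrable (fun ω => μ0 (S1 ω)) P :=
    intbdd ((hμ0m.comp hS1).aestronglyMeasurable) Cμ (ae_of_all _ fun ω => hCμ _)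
  have hF2i : Integrable (fun ω => (if T ω = t then (1:ℝ) else 0) * ν0 (S1 ω, S2 ω)
      * g1 (S1 ω)) P := by
    refine intbdd (((hITm.mul (hν0m.comp hS2b)).mul (hg1m.comp hS1)).aestronglyMeasurable)
      (1 * Cν * κ) (ae_of_all _ fun ω => ?_)
    exact habs _ _ _ _ (habs _ _ _ _ (hIT1 ω) (hCν _)) (hg1b _)
  have hF3i : Integrable (fun ω => (if T ω = t then (1:ℝ) else 0) * μ0 (S1 ω) * g1 (S1 ω)) P := by
    refine intbdd (((hITm.mul (hμ0m.comp hS1)).mul (hg1m.comp hS1)).aestronglyMeasurable)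
      (1 * Cμ * κ) (ae_of_all _ fun ω => ?_)
    exact habs _ _ _ _ (habs _ _ _ _ (hIT1 ω) (hCμ _)) (hg1b _)
  have hF4i : Integrable (fun ω => (if T ω = t then (1:ℝ) else 0)
      * (if Med ω = m then (1:ℝ) else 0) * Ytm ω * (g1 (S1 ω) * g2 (S1 ω, S2 ω))) P := by
    refine intbdd ((((hITm.mul hIMm).mul hYtmm).mul
      ((hg1m.comp hS1).mul (hg2m.comp hS2b))).aestronglyMeasurable)
      (1 * 1 * CY * (κ * κ)) (ae_of_all _ fun ω => ?_)
    exact habs _ _ _ _ (habs _ _ _ _ (habs _ _ _ _ (hIT1 ω) (hIM1 ω)) (hCY _))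
      (habs _ _ _ _ (hg1b _) (hg2b _))
  have hF5i : Integrable (fun ω => (if T ω = t then (1:ℝ) else 0)
      * (if Med ω = m then (1:ℝ) else 0) * ν0 (S1 ω, S2 ω)
      * (g1 (S1 ω) * g2 (S1 ω, S2 ω))) P := by
    refine intbdd ((((hITm.mul hIMm).mul (hν0m.comp hS2b)).mul
      ((hg1m.comp hS1).mul (hg2m.comp hS2b))).aestronglyMeasurable)
      (1 * 1 * Cν * (κ * κ)) (ae_of_all _ fun ω => ?_)
    exact habs _ _ _ _ (habs _ _ _ _ (habs _ _ _ _ (hIT1 ω) (hIM1 ω)) (hCν _))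
      (habs _ _ _ _ (hg1b _) (hg2b _))
  -- split the target integral into five pieces
  have hsplit : ∫ ω, (μ0 (S1 ω)
      + (if T ω = t then (1 : ℝ) else 0) * (ν0 (S1 ω, S2 ω) - μ0 (S1 ω)) / π0 (S1 ω)
      + (if T ω = t then (1 : ℝ) else 0) * (if Med ω = m then (1 : ℝ) else 0)
        * (Y ω - ν0 (S1 ω, S2 ω)) / (π0 (S1 ω) * ρ0 (S1 ω, S2 ω))) ∂P
      = (∫ ω, μ0 (S1 ω) ∂P)
      + ((∫ ω, (if T ω = t then (1:ℝ) else 0) * ν0 (S1 ω, S2 ω) * g1 (S1 ω) ∂P)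
        - (∫ ω, (if T ω = t then (1:ℝ) else 0) * μ0 (S1 ω) * g1 (S1 ω) ∂P))
      + ((∫ ω, (if T ω = t then (1:ℝ) else 0) * (if Med ω = m then (1:ℝ) else 0) * Ytm ω
            * (g1 (S1 ω) * g2 (S1 ω, S2 ω)) ∂P)
        - (∫ ω, (if T ω = t then (1:ℝ) else 0) * (if Med ω = m then (1:ℝ) else 0)
            * ν0 (S1 ω, S2 ω) * (g1 (S1 ω) * g2 (S1 ω, S2 ω)) ∂P)) := by
    have e0 : ∀ᵐ ω ∂P, (μ0 (S1 ω)
        + (if T ω = t then (1 : ℝ) else 0) * (ν0 (S1 ω, S2 ω) - μ0 (S1 ω)) / π0 (S1 ω)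
        + (if T ω = t then (1 : ℝ) else 0) * (if Med ω = m then (1 : ℝ) else 0)
          * (Y ω - ν0 (S1 ω, S2 ω)) / (π0 (S1 ω) * ρ0 (S1 ω, S2 ω)))
        = μ0 (S1 ω)
        + ((if T ω = t then (1:ℝ) else 0) * ν0 (S1 ω, S2 ω) * g1 (S1 ω)
          - (if T ω = t then (1:ℝ) else 0) * μ0 (S1 ω) * g1 (S1 ω))
        + ((if T ω = t then (1:ℝ) else 0) * (if Med ω = m then (1:ℝ) else 0) * Ytm ω
            * (g1 (S1 ω) * g2 (S1 ω, S2 ω))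
          - (if T ω = t then (1:ℝ) else 0) * (if Med ω = m then (1:ℝ) else 0)
            * ν0 (S1 ω, S2 ω) * (g1 (S1 ω) * g2 (S1 ω, S2 ω))) := by
      filter_upwards [hae1, hae2, hpos] with ω h1 h2 hp
      have h3 : (0:ℝ) < π0 (S1 ω) := lt_of_lt_of_le (by positivity) hp.1
      have h4 : (0:ℝ) < ρ0 (S1 ω, S2 ω) := lt_of_lt_of_le (by positivity) hp.2
      have hY := hcons ω
      rw [div_eq_mul_inv, div_eq_mul_inv, mul_inv, ← h1.2, ← h2.2]
      linear_combination (g1 (S1 ω) * g2 (S1 ω, S2 ω)) * hY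
    have h23i : Integrable (fun ω => (if T ω = t then (1:ℝ) else 0) * ν0 (S1 ω, S2 ω) * g1 (S1 ω)
        - (if T ω = t then (1:ℝ) else 0) * μ0 (S1 ω) * g1 (S1 ω)) P := hF2i.sub hF3i
    have h45i : Integrable (fun ω => (if T ω = t then (1:ℝ) else 0)
        * (if Med ω = m then (1:ℝ) else 0) * Ytm ω * (g1 (S1 ω) * g2 (S1 ω, S2 ω))
        - (if T ω = t then (1:ℝ) else 0) * (if Med ω = m then (1:ℝ) else 0)
          * ν0 (S1 ω, S2 ω) * (g1 (S1 ω) * g2 (S1 ω, S2 ω))) P := hF4i.sub hF5i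
    have s1 : ∫ ω, (μ0 (S1 ω)
        + ((if T ω = t then (1:ℝ) else 0) * ν0 (S1 ω, S2 ω) * g1 (S1 ω)
          - (if T ω = t then (1:ℝ) else 0) * μ0 (S1 ω) * g1 (S1 ω))
        + ((if T ω = t then (1:ℝ) else 0) * (if Med ω = m then (1:ℝ) else 0) * Ytm ω
            * (g1 (S1 ω) * g2 (S1 ω, S2 ω))
          - (if T ω = t then (1:ℝ) else 0) * (if Med ω = m then (1:ℝ) else 0)
            * ν0 (S1 ω, S2 ω) * (g1 (S1 ω) * g2 (S1 ω, S2 ω)))) ∂P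
        = (∫ ω, (μ0 (S1 ω)
        + ((if T ω = t then (1:ℝ) else 0) * ν0 (S1 ω, S2 ω) * g1 (S1 ω)
          - (if T ω = t then (1:ℝ) else 0) * μ0 (S1 ω) * g1 (S1 ω))) ∂P)
        + ∫ ω, ((if T ω = t then (1:ℝ) else 0) * (if Med ω = m then (1:ℝ) else 0) * Ytm ω
            * (g1 (S1 ω) * g2 (S1 ω, S2 ω))
          - (if T ω = t then (1:ℝ) else 0) * (if Med ω = m then (1:ℝ) else 0)
            * ν0 (S1 ω, S2 ω) * (g1 (S1 ω) * g2 (S1 ω, S2 ω))) ∂P :=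
      integral_add (hF1i.add h23i) h45i
    have s2 : ∫ ω, (μ0 (S1 ω)
        + ((if T ω = t then (1:ℝ) else 0) * ν0 (S1 ω, S2 ω) * g1 (S1 ω)
          - (if T ω = t then (1:ℝ) else 0) * μ0 (S1 ω) * g1 (S1 ω))) ∂P
        = (∫ ω, μ0 (S1 ω) ∂P)
        + ∫ ω, ((if T ω = t then (1:ℝ) else 0) * ν0 (S1 ω, S2 ω) * g1 (S1 ω)
          - (if T ω = t then (1:ℝ) else 0) * μ0 (S1 ω) * g1 (S1 ω)) ∂P :=
      integral_add hF1i h23i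
    have s3 : ∫ ω, ((if T ω = t then (1:ℝ) else 0) * ν0 (S1 ω, S2 ω) * g1 (S1 ω)
          - (if T ω = t then (1:ℝ) else 0) * μ0 (S1 ω) * g1 (S1 ω)) ∂P
        = (∫ ω, (if T ω = t then (1:ℝ) else 0) * ν0 (S1 ω, S2 ω) * g1 (S1 ω) ∂P)
        - ∫ ω, (if T ω = t then (1:ℝ) else 0) * μ0 (S1 ω) * g1 (S1 ω) ∂P :=
      integral_sub hF2i hF3i
    have s4 : ∫ ω, ((if T ω = t then (1:ℝ) else 0) * (if Med ω = m then (1:ℝ) else 0) * Ytm ω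
            * (g1 (S1 ω) * g2 (S1 ω, S2 ω))
          - (if T ω = t then (1:ℝ) else 0) * (if Med ω = m then (1:ℝ) else 0)
            * ν0 (S1 ω, S2 ω) * (g1 (S1 ω) * g2 (S1 ω, S2 ω))) ∂P
        = (∫ ω, (if T ω = t then (1:ℝ) else 0) * (if Med ω = m then (1:ℝ) else 0) * Ytm ω
            * (g1 (S1 ω) * g2 (S1 ω, S2 ω)) ∂P)
        - ∫ ω, (if T ω = t then (1:ℝ) else 0) * (if Med ω = m then (1:ℝ) else 0)
            * ν0 (S1 ω, S2 ω) * (g1 (S1 ω) * g2 (S1 ω, S2 ω)) ∂P :=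
      integral_sub hF4i hF5i
    rw [integral_congr_ae e0, s1, s2, s3, s4]
  -- term cancellations from the moment conditions
  have hJ5J4 : ∫ ω, (if T ω = t then (1:ℝ) else 0) * (if Med ω = m then (1:ℝ) else 0)
      * ν0 (S1 ω, S2 ω) * (g1 (S1 ω) * g2 (S1 ω, S2 ω)) ∂P
      = ∫ ω, (if T ω = t then (1:ℝ) else 0) * (if Med ω = m then (1:ℝ) else 0) * Ytm ω
      * (g1 (S1 ω) * g2 (S1 ω, S2 ω)) ∂P := by
    have h := hν0mom (fun x => g1 x.1 * g2 x) ((hg1m.comp measurable_fst).mul hg2m)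
      ⟨κ * κ, fun x => habs _ _ _ _ (hg1b _) (hg2b _)⟩
    exact h.symm
  have hJ3J1 : ∫ ω, (if T ω = t then (1:ℝ) else 0) * μ0 (S1 ω) * g1 (S1 ω) ∂P
      = ∫ ω, μ0 (S1 ω) ∂P := by
    have h : ∫ ω, (if T ω = t then (1:ℝ) else 0) * (μ0 (S1 ω) * g1 (S1 ω)) ∂P
        = ∫ ω, π0 (S1 ω) * (μ0 (S1 ω) * g1 (S1 ω)) ∂P :=
      hπ0mom (fun x => μ0 x * g1 x) (hμ0m.mul hg1m)
        ⟨Cμ * κ, fun x => habs _ _ _ _ (hCμ _) (hg1b _)⟩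
    calc ∫ ω, (if T ω = t then (1:ℝ) else 0) * μ0 (S1 ω) * g1 (S1 ω) ∂P
        = ∫ ω, (if T ω = t then (1:ℝ) else 0) * (μ0 (S1 ω) * g1 (S1 ω)) ∂P :=
          integral_congr_ae (ae_of_all _ fun ω => by ring)
      _ = ∫ ω, π0 (S1 ω) * (μ0 (S1 ω) * g1 (S1 ω)) ∂P := h
      _ = ∫ ω, μ0 (S1 ω) ∂P := by
          refine integral_congr_ae ?_
          filter_upwards [hae1] with ω h1
          linear_combination μ0 (S1 ω) * h1.1
  have hJ2J5 : ∫ ω, (if T ω = t then (1:ℝ) else 0) * ν0 (S1 ω, S2 ω) * g1 (S1 ω) ∂P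
      = ∫ ω, (if T ω = t then (1:ℝ) else 0) * (if Med ω = m then (1:ℝ) else 0)
      * ν0 (S1 ω, S2 ω) * (g1 (S1 ω) * g2 (S1 ω, S2 ω)) ∂P := by
    have h : ∫ ω, (if T ω = t then (1:ℝ) else 0) * (if Med ω = m then (1:ℝ) else 0)
        * (ν0 (S1 ω, S2 ω) * (g1 (S1 ω) * g2 (S1 ω, S2 ω))) ∂P
        = ∫ ω, (if T ω = t then (1:ℝ) else 0) * ρ0 (S1 ω, S2 ω)
          * (ν0 (S1 ω, S2 ω) * (g1 (S1 ω) * g2 (S1 ω, S2 ω))) ∂P :=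
      hρ0mom (fun x => ν0 x * (g1 x.1 * g2 x))
        (hν0m.mul ((hg1m.comp measurable_fst).mul hg2m))
        ⟨Cν * (κ * κ), fun x => habs _ _ _ _ (hCν _) (habs _ _ _ _ (hg1b _) (hg2b _))⟩
    calc ∫ ω, (if T ω = t then (1:ℝ) else 0) * ν0 (S1 ω, S2 ω) * g1 (S1 ω) ∂P
        = ∫ ω, (if T ω = t then (1:ℝ) else 0) * ρ0 (S1 ω, S2 ω)
          * (ν0 (S1 ω, S2 ω) * (g1 (S1 ω) * g2 (S1 ω, S2 ω))) ∂P := by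
          refine integral_congr_ae ?_
          filter_upwards [hae2] with ω h2
          linear_combination ((if T ω = t then (1:ℝ) else 0) * ν0 (S1 ω, S2 ω) * g1 (S1 ω))
            * h2.1.symm
      _ = ∫ ω, (if T ω = t then (1:ℝ) else 0) * (if Med ω = m then (1:ℝ) else 0)
          * (ν0 (S1 ω, S2 ω) * (g1 (S1 ω) * g2 (S1 ω, S2 ω))) ∂P := h.symm
      _ = ∫ ω, (if T ω = t then (1:ℝ) else 0) * (if Med ω = m then (1:ℝ) else 0)
          * ν0 (S1 ω, S2 ω) * (g1 (S1 ω) * g2 (S1 ω, S2 ω)) ∂P :=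
          integral_congr_ae (ae_of_all _ fun ω => by ring)
  -- σ-algebra generated by S1
  have hS1c : Measurable[MeasurableSpace.comap S1 inferInstance] S1 :=
    measurable_iff_comap_le.mpr le_rfl
  have hπ0sm : StronglyMeasurable[MeasurableSpace.comap S1 inferInstance] (fun ω => π0 (S1 ω)) :=
    (hπ0m.comp hS1c).stronglyMeasurable
  have hπS1i : Integrable (fun ω => π0 (S1 ω)) P :=
    intbdd ((hπ0m.comp hS1).aestronglyMeasurable) Cπ (ae_of_all _ fun ω => hCπ _)
  have hIndTi : Integrable ((T ⁻¹' {t}).indicator (fun _ => (1:ℝ))) P := by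
    refine intbdd ((measurable_const.indicator
      (hT (measurableSet_singleton t))).aestronglyMeasurable) 1 (ae_of_all _ fun ω => ?_)
    by_cases h : ω ∈ T ⁻¹' {t} <;> simp [Set.indicator_apply, h]
  have hcond1 : (fun ω => π0 (S1 ω)) =ᵐ[P]
      P[(T ⁻¹' {t}).indicator (fun _ => (1:ℝ)) | MeasurableSpace.comap S1 inferInstance] := by
    refine ae_eq_condExp_of_forall_setIntegral_eq hS1.comap_le hIndTi
      (fun s _ _ => hπS1i.integrableOn) (fun s hs _ => ?_) hπ0sm.aestronglyMeasurable
    obtain ⟨B, hB, rfl⟩ := hs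
    have hsm : MeasurableSet (S1 ⁻¹' B) := hS1 hB
    rw [← integral_indicator hsm, ← integral_indicator hsm]
    have h := hπ0mom (fun x => B.indicator (fun _ => (1:ℝ)) x)
      (measurable_const.indicator hB)
      ⟨1, fun x => by by_cases h : x ∈ B <;> simp [Set.indicator_apply, h]⟩
    calc ∫ ω, (S1 ⁻¹' B).indicator (fun ω => π0 (S1 ω)) ω ∂P
        = ∫ ω, π0 (S1 ω) * B.indicator (fun _ => (1:ℝ)) (S1 ω) ∂P := by
          refine integral_congr_ae (ae_of_all _ fun ω => ?_)
          by_cases h2 : S1 ω ∈ B <;> simp [Set.indicator_apply, h2]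
      _ = ∫ ω, (if T ω = t then (1:ℝ) else 0) * B.indicator (fun _ => (1:ℝ)) (S1 ω) ∂P := h.symm
      _ = ∫ ω, (S1 ⁻¹' B).indicator ((T ⁻¹' {t}).indicator (fun _ => (1:ℝ))) ω ∂P := by
          refine integral_congr_ae (ae_of_all _ fun ω => ?_)
          by_cases h2 : S1 ω ∈ B <;> by_cases h3 : T ω = t <;>
            simp [Set.indicator_apply, h2, h3]
  -- Step I : ∫ 1T · Ytm · g1 = ∫ Ytm
  have hstep1 : ∫ ω, (if T ω = t then (1:ℝ) else 0) * Ytm ω * g1 (S1 ω) ∂P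
      = ∫ ω, Ytm ω ∂P := by
    have hZ1sm : StronglyMeasurable[MeasurableSpace.comap S1 inferInstance]
        (fun ω => g1 (S1 ω)) := (hg1m.comp hS1c).stronglyMeasurable
    have hGi : Integrable (fun ω => (T ⁻¹' {t}).indicator (fun _ => (1:ℝ)) ω * Ytm ω) P := by
      refine intbdd (((measurable_const.indicator
        (hT (measurableSet_singleton t))).mul hYtmm).aestronglyMeasurable)
        (1 * CY) (ae_of_all _ fun ω => ?_)
      refine habs _ _ _ _ ?_ (hCY ω)
      by_cases h : ω ∈ T ⁻¹' {t} <;> simp [Set.indicator_apply, h]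
    have hmul := condexp_indicator_mul_condIndep (μ := P) hS1.comap_le hYtmm hT hign1 CY hCY
      (measurableSet_singleton t)
    calc ∫ ω, (if T ω = t then (1:ℝ) else 0) * Ytm ω * g1 (S1 ω) ∂P
        = ∫ ω, g1 (S1 ω) * ((T ⁻¹' {t}).indicator (fun _ => (1:ℝ)) ω * Ytm ω) ∂P := by
          refine integral_congr_ae (ae_of_all _ fun ω => ?_)
          by_cases h : T ω = t <;> simp [Set.indicator_apply, h] <;> ring
      _ = ∫ ω, g1 (S1 ω) * (P[fun ω => (T ⁻¹' {t}).indicator (fun _ => (1:ℝ)) ω * Ytm ω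
            | MeasurableSpace.comap S1 inferInstance]) ω ∂P :=
          (integral_mul_condexp0 hS1.comap_le hZ1sm κ
            (ae_of_all _ fun ω => by simpa [Real.norm_eq_abs] using hg1b (S1 ω)) hGi).symm
      _ = ∫ ω, g1 (S1 ω) * ((P[(T ⁻¹' {t}).indicator (fun _ => (1:ℝ))
              | MeasurableSpace.comap S1 inferInstance]) ω
            * (P[Ytm | MeasurableSpace.comap S1 inferInstance]) ω) ∂P := by
          refine integral_congr_ae ?_
          filter_upwards [hmul] with ω h
          rw [h]
      _ = ∫ ω, (P[Ytm | MeasurableSpace.comap S1 inferInstance]) ω ∂P := by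
          refine integral_congr_ae ?_
          filter_upwards [hcond1, hae1] with ω h1 h2
          rw [← h1]
          linear_combination ((P[Ytm | MeasurableSpace.comap S1 inferInstance]) ω) * h2.1
      _ = ∫ ω, Ytm ω ∂P := integral_condExp hS1.comap_le
  -- positivity of P {T = t}
  have hITint : ∫ ω, (if T ω = t then (1:ℝ) else 0) ∂P = (P {ω | T ω = t}).toReal := by
    have h := integral_indicator_const (1:ℝ) hAmeas (μ := P)
    rw [smul_eq_mul, mul_one] at h
    rw [← measureReal_def, ← h]
    refine integral_congr_ae (ae_of_all _ fun ω => ?_)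
    by_cases h2 : T ω = t <;> simp [Set.indicator_apply, h2, Set.mem_setOf_eq]
  have hgeκ : κ⁻¹ ≤ ∫ ω, π0 (S1 ω) ∂P := by
    have h0 : ∫ _ω, (κ⁻¹ : ℝ) ∂P = κ⁻¹ := by simp
    rw [← h0]
    refine integral_mono_ae (integrable_const _) hπS1i ?_
    filter_upwards [hpos] with ω hω
    rw [inv_eq_one_div]; exact hω.1
  have hctR : κ⁻¹ ≤ (P {ω | T ω = t}).toReal := by
    rw [← hITint]
    have h := hπ0mom (fun _ => (1:ℝ)) measurable_const ⟨1, fun _ => by norm_num⟩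
    simp only [mul_one] at h
    rw [h]; exact hgeκ
  have hc0 : P {ω | T ω = t} ≠ 0 := by
    intro h0
    rw [h0] at hctR; simp at hctR; linarith
  have hcR0 : (P {ω | T ω = t}).toReal ≠ 0 := ne_of_gt (lt_of_lt_of_le hκinv hctR)
  haveI hPtprob : IsProbabilityMeasure (P[|{ω | T ω = t}]) := cond_isProbabilityMeasure hc0
  have htrans : ∀ X : Ω → ℝ, ∫ ω, X ω ∂(P[|{ω | T ω = t}])
      = (P {ω | T ω = t}).toReal⁻¹ * ∫ ω, (if T ω = t then (1:ℝ) else 0) * X ω ∂P := by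
    intro X
    show ∫ ω, X ω ∂((P {ω | T ω = t})⁻¹ • P.restrict {ω | T ω = t}) = _
    rw [integral_smul_measure, ENNReal.toReal_inv, smul_eq_mul]
    congr 1
    rw [← integral_indicator hAmeas]
    refine integral_congr_ae (ae_of_all _ fun ω => ?_)
    by_cases h : T ω = t <;> simp [Set.indicator_apply, h, Set.mem_setOf_eq]
  -- transfer of a.e. facts to the conditional measure
  have hacae : (ae (P[|{ω | T ω = t}])) ≤ ae P :=
    Measure.AbsolutelyContinuous.ae_le cond_absolutelyContinuous
  have hae2Pt : ∀ᵐ ω ∂(P[|{ω | T ω = t}]), g2 (S1 ω, S2 ω) * ρ0 (S1 ω, S2 ω) = 1 :=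
    Filter.Eventually.filter_mono hacae (hae2.mono fun ω h => h.1)
  have hS2c : Measurable[MeasurableSpace.comap (fun ω => (S1 ω, S2 ω)) inferInstance]
      (fun ω => (S1 ω, S2 ω)) := measurable_iff_comap_le.mpr le_rfl
  have hρsm : StronglyMeasurable[MeasurableSpace.comap (fun ω => (S1 ω, S2 ω)) inferInstance]
      (fun ω => ρ0 (S1 ω, S2 ω)) := (hρ0m.comp hS2c).stronglyMeasurable
  have hIndMi : Integrable ((Med ⁻¹' {m}).indicator (fun _ => (1:ℝ))) (P[|{ω | T ω = t}]) := by
    refine intbdd ((measurable_const.indicator hBmeas).aestronglyMeasurable) 1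
      (ae_of_all _ fun ω => ?_)
    by_cases h : ω ∈ Med ⁻¹' {m} <;> simp [Set.indicator_apply, h]
  have hρPti : Integrable (fun ω => ρ0 (S1 ω, S2 ω)) (P[|{ω | T ω = t}]) :=
    intbdd ((hρ0m.comp hS2b).aestronglyMeasurable) Cρ (ae_of_all _ fun ω => hCρ _)
  have hcond2 : (fun ω => ρ0 (S1 ω, S2 ω)) =ᵐ[P[|{ω | T ω = t}]]
      (P[|{ω | T ω = t}])[(Med ⁻¹' {m}).indicator (fun _ => (1:ℝ))
        | MeasurableSpace.comap (fun ω => (S1 ω, S2 ω)) inferInstance] := by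
    refine ae_eq_condExp_of_forall_setIntegral_eq (Measurable.comap_le (hS1.prodMk hS2)) hIndMi
      (fun s _ _ => hρPti.integrableOn) (fun s hs _ => ?_) hρsm.aestronglyMeasurable
    obtain ⟨u, hu, rfl⟩ := hs
    have hsm : MeasurableSet ((fun ω => (S1 ω, S2 ω)) ⁻¹' u) := hS2b hu
    rw [← integral_indicator hsm, ← integral_indicator hsm, htrans _, htrans _]
    congr 1
    have h := hρ0mom (fun x => u.indicator (fun _ => (1:ℝ)) x) (measurable_const.indicator hu)
      ⟨1, fun x => by by_cases h : x ∈ u <;> simp [Set.indicator_apply, h]⟩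
    calc ∫ ω, (if T ω = t then (1:ℝ) else 0)
          * ((fun ω => (S1 ω, S2 ω)) ⁻¹' u).indicator (fun ω => ρ0 (S1 ω, S2 ω)) ω ∂P
        = ∫ ω, (if T ω = t then (1:ℝ) else 0) * ρ0 (S1 ω, S2 ω)
            * u.indicator (fun _ => (1:ℝ)) (S1 ω, S2 ω) ∂P := by
          refine integral_congr_ae (ae_of_all _ fun ω => ?_)
          by_cases h2 : (S1 ω, S2 ω) ∈ u <;> simp [Set.indicator_apply, h2] <;> ring
      _ = ∫ ω, (if T ω = t then (1:ℝ) else 0) * (if Med ω = m then (1:ℝ) else 0)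
            * u.indicator (fun _ => (1:ℝ)) (S1 ω, S2 ω) ∂P := h.symm
      _ = ∫ ω, (if T ω = t then (1:ℝ) else 0)
            * ((fun ω => (S1 ω, S2 ω)) ⁻¹' u).indicator
              ((Med ⁻¹' {m}).indicator (fun _ => (1:ℝ))) ω ∂P := by
          refine integral_congr_ae (ae_of_all _ fun ω => ?_)
          by_cases h2 : (S1 ω, S2 ω) ∈ u <;> by_cases h3 : Med ω = m <;>
            simp [Set.indicator_apply, h2, h3]
  -- Step II : ∫ 1T·1M·Ytm·g1·g2 = ∫ 1T·Ytm·g1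
  have hstep2 : ∫ ω, (if T ω = t then (1:ℝ) else 0) * (if Med ω = m then (1:ℝ) else 0) * Ytm ω
      * (g1 (S1 ω) * g2 (S1 ω, S2 ω)) ∂P
      = ∫ ω, (if T ω = t then (1:ℝ) else 0) * Ytm ω * g1 (S1 ω) ∂P := by
    have hZ2sm : StronglyMeasurable[MeasurableSpace.comap (fun ω => (S1 ω, S2 ω)) inferInstance]
        (fun ω => g1 (S1 ω) * g2 (S1 ω, S2 ω)) :=
      (((hg1m.comp measurable_fst).mul hg2m).comp hS2c).stronglyMeasurable
    have hZ1sm' : StronglyMeasurable[MeasurableSpace.comap (fun ω => (S1 ω, S2 ω)) inferInstance]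
        (fun ω => g1 (S1 ω)) := ((hg1m.comp measurable_fst).comp hS2c).stronglyMeasurable
    have hGi : Integrable (fun ω => (Med ⁻¹' {m}).indicator (fun _ => (1:ℝ)) ω * Ytm ω)
        (P[|{ω | T ω = t}]) := by
      refine intbdd (((measurable_const.indicator hBmeas).mul hYtmm).aestronglyMeasurable)
        (1 * CY) (ae_of_all _ fun ω => ?_)
      refine habs _ _ _ _ ?_ (hCY ω)
      by_cases h : ω ∈ Med ⁻¹' {m} <;> simp [Set.indicator_apply, h]
    have hYi : Integrable Ytm (P[|{ω | T ω = t}]) :=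
      intbdd hYtmm.aestronglyMeasurable CY (ae_of_all _ hCY)
    have hmul := condexp_indicator_mul_condIndep (μ := P[|{ω | T ω = t}])
      (Measurable.comap_le (hS1.prodMk hS2)) hYtmm hMed hign2 CY hCY
      (measurableSet_singleton m)
    have hmid : ∫ ω, (if Med ω = m then (1:ℝ) else 0) * Ytm ω * (g1 (S1 ω) * g2 (S1 ω, S2 ω))
        ∂(P[|{ω | T ω = t}]) = ∫ ω, g1 (S1 ω) * Ytm ω ∂(P[|{ω | T ω = t}]) := by
      calc ∫ ω, (if Med ω = m then (1:ℝ) else 0) * Ytm ω * (g1 (S1 ω) * g2 (S1 ω, S2 ω))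
            ∂(P[|{ω | T ω = t}])
          = ∫ ω, (g1 (S1 ω) * g2 (S1 ω, S2 ω))
              * ((Med ⁻¹' {m}).indicator (fun _ => (1:ℝ)) ω * Ytm ω) ∂(P[|{ω | T ω = t}]) := by
            refine integral_congr_ae (ae_of_all _ fun ω => ?_)
            by_cases h : Med ω = m <;> simp [Set.indicator_apply, h] <;> ring
        _ = ∫ ω, (g1 (S1 ω) * g2 (S1 ω, S2 ω)) * ((P[|{ω | T ω = t}])[fun ω =>
              (Med ⁻¹' {m}).indicator (fun _ => (1:ℝ)) ω * Ytm ω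
              | MeasurableSpace.comap (fun ω => (S1 ω, S2 ω)) inferInstance]) ω
              ∂(P[|{ω | T ω = t}]) :=
            (integral_mul_condexp0 (Measurable.comap_le (hS1.prodMk hS2)) hZ2sm (κ * κ)
              (ae_of_all _ fun ω => by
                have := habs _ _ _ _ (hg1b (S1 ω)) (hg2b (S1 ω, S2 ω))
                simpa only [Real.norm_eq_abs] using this) hGi).symm
        _ = ∫ ω, (g1 (S1 ω) * g2 (S1 ω, S2 ω))
              * (((P[|{ω | T ω = t}])[(Med ⁻¹' {m}).indicator (fun _ => (1:ℝ))
                | MeasurableSpace.comap (fun ω => (S1 ω, S2 ω)) inferInstance]) ω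
              * ((P[|{ω | T ω = t}])[Ytm
                | MeasurableSpace.comap (fun ω => (S1 ω, S2 ω)) inferInstance]) ω)
              ∂(P[|{ω | T ω = t}]) := by
            refine integral_congr_ae ?_
            filter_upwards [hmul] with ω h
            rw [h]
        _ = ∫ ω, g1 (S1 ω) * ((P[|{ω | T ω = t}])[Ytm
              | MeasurableSpace.comap (fun ω => (S1 ω, S2 ω)) inferInstance]) ω
              ∂(P[|{ω | T ω = t}]) := by
            refine integral_congr_ae ?_
            filter_upwards [hcond2, hae2Pt] with ω h1 h2
            rw [← h1]
            linear_combination (g1 (S1 ω) * ((P[|{ω | T ω = t}])[Ytm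
              | MeasurableSpace.comap (fun ω => (S1 ω, S2 ω)) inferInstance]) ω) * h2
        _ = ∫ ω, g1 (S1 ω) * Ytm ω ∂(P[|{ω | T ω = t}]) :=
            integral_mul_condexp0 (Measurable.comap_le (hS1.prodMk hS2)) hZ1sm' κ
              (ae_of_all _ fun ω => by simpa [Real.norm_eq_abs] using hg1b (S1 ω)) hYi
    have l1 := htrans (fun ω => (if Med ω = m then (1:ℝ) else 0) * Ytm ω
      * (g1 (S1 ω) * g2 (S1 ω, S2 ω)))
    have l2 := htrans (fun ω => g1 (S1 ω) * Ytm ω)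
    rw [hmid, l2] at l1
    have l3 := mul_left_cancel₀ (inv_ne_zero hcR0) l1
    calc ∫ ω, (if T ω = t then (1:ℝ) else 0) * (if Med ω = m then (1:ℝ) else 0) * Ytm ω
          * (g1 (S1 ω) * g2 (S1 ω, S2 ω)) ∂P
        = ∫ ω, (if T ω = t then (1:ℝ) else 0) * ((if Med ω = m then (1:ℝ) else 0) * Ytm ω
          * (g1 (S1 ω) * g2 (S1 ω, S2 ω))) ∂P :=
          integral_congr_ae (ae_of_all _ fun ω => by ring)
      _ = ∫ ω, (if T ω = t then (1:ℝ) else 0) * (g1 (S1 ω) * Ytm ω) ∂P := l3.symm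
      _ = ∫ ω, (if T ω = t then (1:ℝ) else 0) * Ytm ω * g1 (S1 ω) ∂P :=
          integral_congr_ae (ae_of_all _ fun ω => by ring)
  rw [hsplit, hJ3J1, hJ2J5, hJ5J4, hstep2, hstep1]
  ring
end

section
/- (Empirical risk comparison for nested regression, realized form of Lemma S.1.) Let n ≥ 1 and, for i = 1, …, n, let xᵢ ∈ 𝒳, rᵢ ∈ {0,1}, and yᵢ, dᵢ, eᵢ ∈ ℝ; set ŷᵢ := yᵢ + dᵢ + eᵢ. Let f̂, f̄, f⁰ : 𝒳 → ℝ be functions such that Σᵢ rᵢ·(ŷᵢ − f̂(xᵢ))² ≤ Σᵢ rᵢ·(ŷᵢ − f̄(xᵢ))² (f̂ has empirical squared-error risk no larger than f̄). Then (1/n)·Σᵢ rᵢ·(f̂(xᵢ) − f⁰(xᵢ))² ≤ (1/n)·Σᵢ rᵢ·(f⁰(xᵢ) − f̄(xᵢ))² + 2·( (1/n)·Σᵢ rᵢ·eᵢ² )^{1/2} · ( (1/n)·Σᵢ rᵢ·(f̂(xᵢ) − f̄(xᵢ))² )^{1/2} + (2/n)·Σᵢ rᵢ·(f̂(xᵢ)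 − f̄(xᵢ))·(yᵢ − f⁰(xᵢ) + dᵢ). -/
open Finset

/-- Empirical risk comparison for nested regression (realized form of the
basic oracle inequality): if `f̂` has empirical squared-error risk no larger than `f̄` on the
estimated pseudo-outcomes `yhᵢ = yᵢ + dᵢ + eᵢ`, then the empirical squared distance of `f̂` to
`f⁰` is controlled as stated. -/
theorem empirical_risk_comparison_nested_regression
    {𝒳 : Type*} (n : ℕ) (hn : 1 ≤ n)
    (x : Fin n → 𝒳) (r : Fin n → ℝ) (hr : ∀ i, r i = 0 ∨ r i = 1)
    (y d e yh : Fin n → ℝ) (hyh : ∀ i, yh i = y i + d i + e i)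
    (fhat fbar f0 : 𝒳 → ℝ)
    (herm : ∑ i, r i * (yh i - fhat (x i)) ^ 2 ≤ ∑ i, r i * (yh i - fbar (x i)) ^ 2) :
    (1 / (n : ℝ)) * ∑ i, r i * (fhat (x i) - f0 (x i)) ^ 2
      ≤ (1 / (n : ℝ)) * ∑ i, r i * (f0 (x i) - fbar (x i)) ^ 2
        + 2 * Real.sqrt ((1 / (n : ℝ)) * ∑ i, r i * (e i) ^ 2)
            * Real.sqrt ((1 / (n : ℝ)) * ∑ i, r i * (fhat (x i) - fbar (x i)) ^ 2)
        + (2 / (n : ℝ)) * ∑ i, r i * (fhat (x i) - fbar (x i)) * (y i - f0 (x i) + d i) := by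
  have hn0 : (0:ℝ) < (n:ℝ) := by exact_mod_cast hn
  have hinv : (0:ℝ) ≤ 1 / (n:ℝ) := by positivity
  -- per-term algebraic identity
  have hid : ∀ i, r i * (fhat (x i) - f0 (x i)) ^ 2
      = r i * (yh i - fhat (x i)) ^ 2 - r i * (yh i - fbar (x i)) ^ 2
        + r i * (f0 (x i) - fbar (x i)) ^ 2
        + 2 * (r i * (fhat (x i) - fbar (x i)) * e i)
        + 2 * (r i * (fhat (x i) - fbar (x i)) * (y i - f0 (x i) + d i)) := by
    intro i; rw [hyh i]; ring
  have hsum : ∑ i, r i * (fhat (x i) - f0 (x i)) ^ 2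
      = (∑ i, r i * (yh i - fhat (x i)) ^ 2) - (∑ i, r i * (yh i - fbar (x i)) ^ 2)
        + ∑ i, r i * (f0 (x i) - fbar (x i)) ^ 2
        + 2 * ∑ i, r i * (fhat (x i) - fbar (x i)) * e i
        + 2 * ∑ i, r i * (fhat (x i) - fbar (x i)) * (y i - f0 (x i) + d i) := by
    rw [Finset.mul_sum, Finset.mul_sum, ← Finset.sum_sub_distrib, ← Finset.sum_add_distrib,
      ← Finset.sum_add_distrib, ← Finset.sum_add_distrib]
    exact Finset.sum_congr rfl fun i _ => hid i
  -- Cauchy–Schwarz on the e-term, using r i ^ 2 = r i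
  have hrr : ∀ i, r i * r i = r i := by
    intro i; rcases hr i with h | h <;> simp [h]
  have hcs : ∑ i, r i * (fhat (x i) - fbar (x i)) * e i
      ≤ Real.sqrt (∑ i, r i * (e i) ^ 2) *
        Real.sqrt (∑ i, r i * (fhat (x i) - fbar (x i)) ^ 2) := by
    have h1 : ∑ i, r i * (fhat (x i) - fbar (x i)) * e i
        = ∑ i, (r i * e i) * (r i * (fhat (x i) - fbar (x i))) := by
      apply Finset.sum_congr rfl; intro i _
      rw [show (r i * e i) * (r i * (fhat (x i) - fbar (x i)))
          = (r i * r i) * ((fhat (x i) - fbar (x i)) * e i) from by ring, hrr i]; ring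
    have h3 : ∑ i, (r i * e i) ^ 2 = ∑ i, r i * (e i) ^ 2 := by
      apply Finset.sum_congr rfl; intro i _
      rw [show (r i * e i) ^ 2 = (r i * r i) * (e i) ^ 2 from by ring, hrr i]
    have h4 : ∑ i, (r i * (fhat (x i) - fbar (x i))) ^ 2
        = ∑ i, r i * (fhat (x i) - fbar (x i)) ^ 2 := by
      apply Finset.sum_congr rfl; intro i _
      rw [show (r i * (fhat (x i) - fbar (x i))) ^ 2
          = (r i * r i) * (fhat (x i) - fbar (x i)) ^ 2 from by ring, hrr i]
    rw [h1, ← h3, ← h4]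
    exact Real.sum_mul_le_sqrt_mul_sqrt _ _ _
  -- combine
  have key : ∑ i, r i * (fhat (x i) - f0 (x i)) ^ 2
      ≤ ∑ i, r i * (f0 (x i) - fbar (x i)) ^ 2
        + 2 * (Real.sqrt (∑ i, r i * (e i) ^ 2) *
            Real.sqrt (∑ i, r i * (fhat (x i) - fbar (x i)) ^ 2))
        + 2 * ∑ i, r i * (fhat (x i) - fbar (x i)) * (y i - f0 (x i) + d i) := by
    rw [hsum]; linarith
  -- multiply through by 1/n and rewrite the sqrt factors
  have hsqrt : Real.sqrt ((1 / (n:ℝ)) * ∑ i, r i * (e i) ^ 2) *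
      Real.sqrt ((1 / (n:ℝ)) * ∑ i, r i * (fhat (x i) - fbar (x i)) ^ 2)
      = (1 / (n:ℝ)) * (Real.sqrt (∑ i, r i * (e i) ^ 2) *
          Real.sqrt (∑ i, r i * (fhat (x i) - fbar (x i)) ^ 2)) := by
    rw [Real.sqrt_mul hinv, Real.sqrt_mul hinv]
    rw [show Real.sqrt (1/(n:ℝ)) * Real.sqrt (∑ i, r i * (e i) ^ 2) *
        (Real.sqrt (1/(n:ℝ)) * Real.sqrt (∑ i, r i * (fhat (x i) - fbar (x i)) ^ 2))
        = (Real.sqrt (1/(n:ℝ)) * Real.sqrt (1/(n:ℝ))) * (Real.sqrt (∑ i, r i * (e i) ^ 2) *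
          Real.sqrt (∑ i, r i * (fhat (x i) - fbar (x i)) ^ 2)) from by ring]
    rw [Real.mul_self_sqrt hinv]
  have hmul := mul_le_mul_of_nonneg_left key hinv
  calc (1 / (n : ℝ)) * ∑ i, r i * (fhat (x i) - f0 (x i)) ^ 2
      ≤ (1 / (n:ℝ)) * (∑ i, r i * (f0 (x i) - fbar (x i)) ^ 2
        + 2 * (Real.sqrt (∑ i, r i * (e i) ^ 2) *
            Real.sqrt (∑ i, r i * (fhat (x i) - fbar (x i)) ^ 2))
        + 2 * ∑ i, r i * (fhat (x i) - fbar (x i)) * (y i - f0 (x i) + d i)) := hmul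
    _ = (1 / (n : ℝ)) * ∑ i, r i * (f0 (x i) - fbar (x i)) ^ 2
        + 2 * Real.sqrt ((1 / (n : ℝ)) * ∑ i, r i * (e i) ^ 2)
            * Real.sqrt ((1 / (n : ℝ)) * ∑ i, r i * (fhat (x i) - fbar (x i)) ^ 2)
        + (2 / (n : ℝ)) * ∑ i, r i * (fhat (x i) - fbar (x i)) * (y i - f0 (x i) + d i) := by
      rw [show 2 * Real.sqrt ((1 / (n:ℝ)) * ∑ i, r i * (e i) ^ 2)
            * Real.sqrt ((1 / (n:ℝ)) * ∑ i, r i * (fhat (x i) - fbar (x i)) ^ 2)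
          = 2 * (Real.sqrt ((1 / (n:ℝ)) * ∑ i, r i * (e i) ^ 2)
            * Real.sqrt ((1 / (n:ℝ)) * ∑ i, r i * (fhat (x i) - fbar (x i)) ^ 2)) from by ring,
        hsqrt]
      ring
end

section
/- (Population oracle inequality, second part of Lemma S.1 in realized form.) Let (Ω, 𝔉, P) be a probability space carrying bounded measurable random variables X : Ω → 𝒳 (a measurable space), R : Ω → {0,1}, and Y^#, Δ₁, Δ₂ : Ω → ℝ. Let f⁰ : 𝒳 → ℝ be a bounded measurable function such that E[R·(Y^# − f⁰(X))·h(X)] = 0 and E[R·Δ₁·h(X)] = 0 for every bounded measurable h : 𝒳 → ℝ. Let n ≥ 1 and let (x₁, r₁, y₁, d₁, e₁), …, (xₙ, rₙ, yₙ, dₙ, eₙ) be arbitrary points of 𝒳 × {0,1} × ℝ³ with ŷᵢ := yᵢ + dᵢ + eᵢ, and let f̂, f̄ : 𝒳 → ℝ be bounded measurable functions with Σᵢ rᵢ·(ŷᵢ − f̂(xᵢ))² ≤ Σᵢ rᵢ·(ŷᵢ − f̄(xᵢ))². Writing E_n[·] for the average (1/n)Σᵢ over the sample points, the following holds: E[R·(f̂(X)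 − f⁰(X))²] ≤ E[R·(f⁰(X) − f̄(X))²] + W₁ + W₂, where W₁ := E_n[ rᵢ·(f̂(xᵢ) − f̄(xᵢ))·(2yᵢ − f̂(xᵢ) − f̄(xᵢ) + 2dᵢ) ] − E[ R·(f̂(X) − f̄(X))·(2Y^# − f̂(X) − f̄(X) + 2Δ₁) ] and W₂ := 2·( E_n[rᵢ·eᵢ²] )^{1/2} · ( E_n[rᵢ·(f̂(xᵢ) − f̄(xᵢ))²] )^{1/2}. -/
open MeasureTheory Finset

private lemma bdd_mul' {α : Type*} {F G : α → ℝ} (hF : ∃ C, ∀ a, |F a| ≤ C)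
    (hG : ∃ C, ∀ a, |G a| ≤ C) : ∃ C, ∀ a, |F a * G a| ≤ C := by
  obtain ⟨C, hC⟩ := hF; obtain ⟨D, hD⟩ := hG
  exact ⟨C * D, fun a => by
    rw [abs_mul]
    exact mul_le_mul (hC a) (hD a) (abs_nonneg _) ((abs_nonneg _).trans (hC a))⟩

private lemma bdd_sub' {α : Type*} {F G : α → ℝ} (hF : ∃ C, ∀ a, |F a| ≤ C)
    (hG : ∃ C, ∀ a, |G a| ≤ C) : ∃ C, ∀ a, |F a - G a| ≤ C := by
  obtain ⟨C, hC⟩ := hF; obtain ⟨D, hD⟩ := hG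
  exact ⟨C + D, fun a => (abs_sub _ _).trans (add_le_add (hC a) (hD a))⟩

private lemma bdd_add' {α : Type*} {F G : α → ℝ} (hF : ∃ C, ∀ a, |F a| ≤ C)
    (hG : ∃ C, ∀ a, |G a| ≤ C) : ∃ C, ∀ a, |F a + G a| ≤ C := by
  obtain ⟨C, hC⟩ := hF; obtain ⟨D, hD⟩ := hG
  exact ⟨C + D, fun a => (abs_add_le _ _).trans (add_le_add (hC a) (hD a))⟩

private lemma bdd_sq' {α : Type*} {F : α → ℝ} (hF : ∃ C, ∀ a, |F a| ≤ C) :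
    ∃ C, ∀ a, |F a ^ 2| ≤ C := by
  obtain ⟨C, hC⟩ := bdd_mul' hF hF
  exact ⟨C, fun a => by rw [pow_two]; exact hC a⟩

private lemma integrable_of_bdd' {Ω : Type*} [MeasurableSpace Ω] {P : Measure Ω}
    [IsProbabilityMeasure P] {F : Ω → ℝ} (hm : Measurable F) (hb : ∃ C, ∀ ω, |F ω| ≤ C) :
    Integrable F P := by
  obtain ⟨C, hC⟩ := hb
  exact (integrable_const C).mono' hm.aestronglyMeasurable
    (Filter.Eventually.of_forall fun ω => by simpa [Real.norm_eq_abs] using hC ω)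

/-- Population oracle inequality for nested regression (realized form):
under the orthogonality conditions `E[R·(Y^# − f⁰(X))·h(X)] = 0` and `E[R·Δ₁·h(X)] = 0`, the
population squared error of the empirical risk minimizer `f̂` is bounded by the population
squared error of any comparison function `f̄` plus an empirical-process term `W₁` and a
second-order term `W₂`. -/
theorem population_oracle_inequality_nested_regression
    {𝒳 : Type*} [MeasurableSpace 𝒳]
    {Ω : Type*} [MeasurableSpace Ω] (P : Measure Ω) [IsProbabilityMeasure P]
    (X : Ω → 𝒳) (hX : Measurable X)
    (R : Ω → ℝ) (hR : Measurable R) (hR01 : ∀ ω, R ω = 0 ∨ R ω = 1)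
    (Ysharp Δ1 Δ2 : Ω → ℝ)
    (hYsharpm : Measurable Ysharp) (hΔ1m : Measurable Δ1) (hΔ2m : Measurable Δ2)
    (hYsharpb : ∃ C, ∀ ω, |Ysharp ω| ≤ C) (hΔ1b : ∃ C, ∀ ω, |Δ1 ω| ≤ C)
    (hΔ2b : ∃ C, ∀ ω, |Δ2 ω| ≤ C)
    (f0 : 𝒳 → ℝ) (hf0m : Measurable f0) (hf0b : ∃ C, ∀ x, |f0 x| ≤ C)
    (horth : ∀ h : 𝒳 → ℝ, Measurable h → (∃ C, ∀ x, |h x| ≤ C) →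
      ∫ ω, R ω * (Ysharp ω - f0 (X ω)) * h (X ω) ∂P = 0)
    (horth1 : ∀ h : 𝒳 → ℝ, Measurable h → (∃ C, ∀ x, |h x| ≤ C) →
      ∫ ω, R ω * Δ1 ω * h (X ω) ∂P = 0)
    (n : ℕ) (hn : 1 ≤ n)
    (x : Fin n → 𝒳) (r : Fin n → ℝ) (hr : ∀ i, r i = 0 ∨ r i = 1)
    (y d e yh : Fin n → ℝ) (hyh : ∀ i, yh i = y i + d i + e i)
    (fhat fbar : 𝒳 → ℝ) (hfhatm : Measurable fhat) (hfbarm : Measurable fbar)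
    (hfhatb : ∃ C, ∀ x, |fhat x| ≤ C) (hfbarb : ∃ C, ∀ x, |fbar x| ≤ C)
    (herm : ∑ i, r i * (yh i - fhat (x i)) ^ 2 ≤ ∑ i, r i * (yh i - fbar (x i)) ^ 2) :
    ∫ ω, R ω * (fhat (X ω) - f0 (X ω)) ^ 2 ∂P
      ≤ (∫ ω, R ω * (f0 (X ω) - fbar (X ω)) ^ 2 ∂P)
        + ((1 / (n : ℝ)) * ∑ i, r i * (fhat (x i) - fbar (x i))
              * (2 * y i - fhat (x i) - fbar (x i) + 2 * d i)
          - ∫ ω, R ω * (fhat (X ω) - fbar (X ω))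
              * (2 * Ysharp ω - fhat (X ω) - fbar (X ω) + 2 * Δ1 ω) ∂P)
        + 2 * Real.sqrt ((1 / (n : ℝ)) * ∑ i, r i * (e i) ^ 2)
            * Real.sqrt ((1 / (n : ℝ)) * ∑ i, r i * (fhat (x i) - fbar (x i)) ^ 2) := by
  -- boundedness facts
  have hRb : ∃ C, ∀ ω, |R ω| ≤ C := ⟨1, fun ω => by rcases hR01 ω with h | h <;> simp [h]⟩
  have hfhXb : ∃ C, ∀ ω, |fhat (X ω)| ≤ C := hfhatb.imp fun C hC ω => hC _
  have hfbXb : ∃ C, ∀ ω, |fbar (X ω)| ≤ C := hfbarb.imp fun C hC ω => hC _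
  have hf0Xb : ∃ C, ∀ ω, |f0 (X ω)| ≤ C := hf0b.imp fun C hC ω => hC _
  have hgXb : ∃ C, ∀ ω, |fhat (X ω) - fbar (X ω)| ≤ C := bdd_sub' hfhXb hfbXb
  -- measurability facts
  have hfhX : Measurable fun ω => fhat (X ω) := hfhatm.comp hX
  have hfbX : Measurable fun ω => fbar (X ω) := hfbarm.comp hX
  have hf0X : Measurable fun ω => f0 (X ω) := hf0m.comp hX
  -- integrability of the four pieces
  have i1 : Integrable (fun ω => R ω * (Ysharp ω - f0 (X ω)) * (fhat (X ω) - fbar (X ω))) P :=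
    integrable_of_bdd' ((hR.mul (hYsharpm.sub hf0X)).mul (hfhX.sub hfbX))
      (bdd_mul' (bdd_mul' hRb (bdd_sub' hYsharpb hf0Xb)) hgXb)
  have i2 : Integrable (fun ω => R ω * Δ1 ω * (fhat (X ω) - fbar (X ω))) P :=
    integrable_of_bdd' ((hR.mul hΔ1m).mul (hfhX.sub hfbX))
      (bdd_mul' (bdd_mul' hRb hΔ1b) hgXb)
  have i3 : Integrable (fun ω => R ω * (f0 (X ω) - fbar (X ω)) ^ 2) P :=
    integrable_of_bdd' (hR.mul ((hf0X.sub hfbX).pow_const 2))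
      (bdd_mul' hRb (bdd_sq' (bdd_sub' hf0Xb hfbXb)))
  have i4 : Integrable (fun ω => R ω * (fhat (X ω) - f0 (X ω)) ^ 2) P :=
    integrable_of_bdd' (hR.mul ((hfhX.sub hf0X).pow_const 2))
      (bdd_mul' hRb (bdd_sq' (bdd_sub' hfhXb hf0Xb)))
  -- orthogonality applied to h = fhat - fbar
  have horthA : ∫ ω, R ω * (Ysharp ω - f0 (X ω)) * (fhat (X ω) - fbar (X ω)) ∂P = 0 := by
    simpa using horth (fun z => fhat z - fbar z) (hfhatm.sub hfbarm) (bdd_sub' hfhatb hfbarb)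
  have horthB : ∫ ω, R ω * Δ1 ω * (fhat (X ω) - fbar (X ω)) ∂P = 0 := by
    simpa using horth1 (fun z => fhat z - fbar z) (hfhatm.sub hfbarm) (bdd_sub' hfhatb hfbarb)
  -- population identity: T = I2 - I1
  have hT : ∫ ω, R ω * (fhat (X ω) - fbar (X ω))
        * (2 * Ysharp ω - fhat (X ω) - fbar (X ω) + 2 * Δ1 ω) ∂P
      = (∫ ω, R ω * (f0 (X ω) - fbar (X ω)) ^ 2 ∂P)
        - ∫ ω, R ω * (fhat (X ω) - f0 (X ω)) ^ 2 ∂P := by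
    have hpt : ∀ ω, R ω * (fhat (X ω) - fbar (X ω))
          * (2 * Ysharp ω - fhat (X ω) - fbar (X ω) + 2 * Δ1 ω)
        = 2 * (R ω * (Ysharp ω - f0 (X ω)) * (fhat (X ω) - fbar (X ω)))
          + 2 * (R ω * Δ1 ω * (fhat (X ω) - fbar (X ω)))
          + (R ω * (f0 (X ω) - fbar (X ω)) ^ 2 - R ω * (fhat (X ω) - f0 (X ω)) ^ 2) := by
      intro ω; ring
    have h12 : Integrable (fun ω => 2 * (R ω * (Ysharp ω - f0 (X ω)) * (fhat (X ω) - fbar (X ω)))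
        + 2 * (R ω * Δ1 ω * (fhat (X ω) - fbar (X ω)))) P :=
      (i1.const_mul 2).add (i2.const_mul 2)
    have h34 : Integrable (fun ω => R ω * (f0 (X ω) - fbar (X ω)) ^ 2
        - R ω * (fhat (X ω) - f0 (X ω)) ^ 2) P := i3.sub i4
    rw [integral_congr_ae (Filter.Eventually.of_forall hpt),
      integral_add h12 h34,
      integral_add (i1.const_mul 2) (i2.const_mul 2),
      integral_sub i3 i4, integral_const_mul, integral_const_mul, horthA, horthB]
    ring
  -- empirical side
  have hnpos : (0 : ℝ) < n := by exact_mod_cast hn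
  have hinv : (0 : ℝ) ≤ 1 / n := by positivity
  set A := ∑ i, r i * (e i) ^ 2 with hA
  set B := ∑ i, r i * (fhat (x i) - fbar (x i)) ^ 2 with hB
  have hA0 : 0 ≤ A := Finset.sum_nonneg fun i _ => by
    rcases hr i with h | h <;> simp [h] <;> positivity
  have hB0 : 0 ≤ B := Finset.sum_nonneg fun i _ => by
    rcases hr i with h | h <;> simp [h] <;> positivity
  -- ERM expansion
  have herm' : 0 ≤ ∑ i, r i * (fhat (x i) - fbar (x i))
        * (2 * y i - fhat (x i) - fbar (x i) + 2 * d i)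
      + 2 * ∑ i, r i * (fhat (x i) - fbar (x i)) * e i := by
    have hsum : ∑ i, r i * (yh i - fbar (x i)) ^ 2 - ∑ i, r i * (yh i - fhat (x i)) ^ 2
        = ∑ i, r i * (fhat (x i) - fbar (x i))
            * (2 * y i - fhat (x i) - fbar (x i) + 2 * d i)
          + 2 * ∑ i, r i * (fhat (x i) - fbar (x i)) * e i := by
      rw [← Finset.sum_sub_distrib, Finset.mul_sum, ← Finset.sum_add_distrib]
      refine Finset.sum_congr rfl fun i _ => ?_
      rw [hyh i]; ring
    linarith [herm, hsum]
  -- Cauchy–Schwarz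
  have hcs : |∑ i, r i * (fhat (x i) - fbar (x i)) * e i| ≤ Real.sqrt A * Real.sqrt B := by
    have h1 : ∑ i, (r i * e i) * (r i * (fhat (x i) - fbar (x i)))
        = ∑ i, r i * (fhat (x i) - fbar (x i)) * e i := by
      refine Finset.sum_congr rfl fun i _ => ?_
      rcases hr i with h | h <;> simp [h] <;> ring
    have h2 : ∑ i, (r i * e i) ^ 2 = A := by
      refine Finset.sum_congr rfl fun i _ => ?_
      rcases hr i with h | h <;> simp [h, mul_pow]
    have h3 : ∑ i, (r i * (fhat (x i) - fbar (x i))) ^ 2 = B := by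
      refine Finset.sum_congr rfl fun i _ => ?_
      rcases hr i with h | h <;> simp [h, mul_pow]
    have := Finset.sum_mul_sq_le_sq_mul_sq Finset.univ (fun i => r i * e i)
      (fun i => r i * (fhat (x i) - fbar (x i)))
    rw [h1, h2, h3] at this
    have habs : |∑ i, r i * (fhat (x i) - fbar (x i)) * e i| ≤ Real.sqrt (A * B) := by
      rw [← Real.sqrt_sq_eq_abs]
      exact Real.sqrt_le_sqrt this
    rwa [Real.sqrt_mul hA0] at habs
  -- rewrite W2
  have hW2 : 2 * Real.sqrt ((1 / (n : ℝ)) * A) * Real.sqrt ((1 / (n : ℝ)) * B)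
      = (1 / (n : ℝ)) * (2 * (Real.sqrt A * Real.sqrt B)) := by
    rw [Real.sqrt_mul hinv, Real.sqrt_mul hinv]
    have : Real.sqrt (1 / n) * Real.sqrt (1 / n) = 1 / (n : ℝ) := Real.mul_self_sqrt hinv
    linear_combination (2 * Real.sqrt A * Real.sqrt B) * this
  -- conclude
  have hkey : 0 ≤ (1 / (n : ℝ)) * ∑ i, r i * (fhat (x i) - fbar (x i))
        * (2 * y i - fhat (x i) - fbar (x i) + 2 * d i)
      + 2 * Real.sqrt ((1 / (n : ℝ)) * A) * Real.sqrt ((1 / (n : ℝ)) * B) := by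
    rw [hW2, ← mul_add]
    refine mul_nonneg hinv ?_
    have hle : ∑ i, r i * (fhat (x i) - fbar (x i)) * e i ≤ Real.sqrt A * Real.sqrt B :=
      le_of_abs_le hcs
    linarith [herm', hle]
  linarith [hT, hkey]
end
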